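/- arXiv:math/0411267 — 6 statements merged into one kernel-verified Lean document; each statement's English description precedes it below -/
import Mathlib

section
/- For every complex number β not in {0, -1, -2, ...}, every integer q ≥ 0, and every integer s ≥ 2, one has ∑_{m=0}^{q} C(q,m) (-1)^m / (β + m)^s = (q! / (β)_{q+1}) · ∑_{0 ≤ i_1 ≤ ... ≤ i_{s-1} ≤ q} ∏_{r=1}^{s-1} 1/(β + i_r). -/
open scoped Classical
open Finset

namespace ABSMH

noncomputable def E (x : ℕ → ℂ) (t a b : ℕ) : ℂ :=
  ∑ f ∈ (Fintype.piFinset fun _ : Fin t => Finset.Icc a b).filter Monotone,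
    ∏ r, x (f r)

lemma E_zero (x : ℕ → ℂ) (a b : ℕ) : E x 0 a b = 1 := by
  rw [E]
  have h1 : ∀ f : Fin 0 → ℕ, Monotone f := fun f i => i.elim0
  rw [Finset.filter_true_of_mem (fun f _ => h1 f)]
  simp

lemma E_const (x : ℕ → ℂ) (t a : ℕ) : E x t a a = (x a) ^ t := by
  rw [E]
  have h1 : (Fintype.piFinset fun _ : Fin t => Finset.Icc a a).filter Monotone
      = {fun _ => a} := by
    ext f
    simp only [Finset.mem_filter, Fintype.mem_piFinset, Finset.mem_Icc, Finset.mem_singleton]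
    constructor
    · rintro ⟨h, -⟩
      funext r
      exact le_antisymm ((h r).2) ((h r).1)
    · rintro rfl
      exact ⟨fun r => ⟨le_rfl, le_rfl⟩, monotone_const⟩
  rw [h1, Finset.sum_singleton]
  simp [Finset.prod_const]

lemma monotone_cons {t : ℕ} {a : ℕ} {g : Fin t → ℕ} (hg : Monotone g)
    (ha : ∀ r, a ≤ g r) : Monotone (Fin.cons a g) := by
  intro i j hij
  induction j using Fin.cases with
  | zero =>
      have hi : i = 0 := le_antisymm hij (Fin.zero_le i)
      subst hi; exact le_rfl
  | succ j =>
      induction i using Fin.cases with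
      | zero => simpa using ha j
      | succ i => simpa using hg (Fin.succ_le_succ_iff.mp hij)

lemma monotone_snoc {t : ℕ} {b : ℕ} {g : Fin t → ℕ} (hg : Monotone g)
    (hb : ∀ r, g r ≤ b) : Monotone (Fin.snoc g b) := by
  intro i j hij
  induction i using Fin.lastCases with
  | last =>
      have hj : j = Fin.last t := le_antisymm (Fin.le_last j) hij
      subst hj; exact le_rfl
  | cast i =>
      induction j using Fin.lastCases with
      | last => simpa using hb i
      | cast j => simpa using hg (Fin.castSucc_le_castSucc_iff.mp hij)

lemma E_split_low (x : ℕ → ℂ) (t a b : ℕ) (hab : a ≤ b) :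
    E x (t+1) a b = x a * E x t a b + E x (t+1) (a+1) b := by
  rw [E]
  rw [← Finset.sum_filter_add_sum_filter_not
      ((Fintype.piFinset fun _ : Fin (t+1) => Finset.Icc a b).filter Monotone)
      (fun f => f 0 = a)]
  congr 1
  · rw [E, Finset.mul_sum]
    refine Finset.sum_nbij' (i := fun f => f ∘ Fin.succ) (j := fun g => Fin.cons a g)
      ?_ ?_ ?_ ?_ ?_
    · intro f hf
      simp only [Finset.mem_filter, Fintype.mem_piFinset, Finset.mem_Icc] at hf ⊢
      exact ⟨fun r => hf.1.1 r.succ, hf.1.2.comp Fin.strictMono_succ.monotone⟩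
    · intro g hg
      simp only [Finset.mem_filter, Fintype.mem_piFinset, Finset.mem_Icc] at hg ⊢
      refine ⟨⟨?_, monotone_cons hg.2 (fun r => (hg.1 r).1)⟩, by simp⟩
      intro r
      induction r using Fin.cases with
      | zero => simpa using hab
      | succ r => simpa using hg.1 r
    · intro f hf
      simp only [Finset.mem_filter] at hf
      rw [← hf.2]
      exact Fin.cons_self_tail f
    · intro g hg
      funext r
      simp [Fin.cons_succ]
    · intro f hf
      simp only [Finset.mem_filter] at hf
      rw [Fin.prod_univ_succ, hf.2]
      rfl
  · congr 1
    ext f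
    simp only [Finset.mem_filter, Fintype.mem_piFinset, Finset.mem_Icc]
    constructor
    · rintro ⟨⟨hmem, hmono⟩, hne⟩
      refine ⟨fun r => ⟨?_, (hmem r).2⟩, hmono⟩
      have h0 : a ≤ f 0 := (hmem 0).1
      have h1 : a + 1 ≤ f 0 := by omega
      exact le_trans h1 (hmono (Fin.zero_le r))
    · rintro ⟨hmem, hmono⟩
      have h0 : a + 1 ≤ f 0 := (hmem 0).1
      exact ⟨⟨fun r => ⟨le_trans (Nat.le_succ a) (hmem r).1, (hmem r).2⟩, hmono⟩, by omega⟩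

lemma E_split_high (x : ℕ → ℂ) (t a b : ℕ) (hab : a ≤ b + 1) :
    E x (t+1) a (b+1) = E x (t+1) a b + x (b+1) * E x t a (b+1) := by
  rw [E]
  rw [← Finset.sum_filter_add_sum_filter_not
      ((Fintype.piFinset fun _ : Fin (t+1) => Finset.Icc a (b+1)).filter Monotone)
      (fun f => f (Fin.last t) ≤ b)]
  congr 1
  · rw [E]
    congr 1
    ext f
    simp only [Finset.mem_filter, Fintype.mem_piFinset, Finset.mem_Icc]
    constructor
    · rintro ⟨⟨hmem, hmono⟩, hle⟩
      exact ⟨fun r => ⟨(hmem r).1, le_trans (hmono (Fin.le_last r)) hle⟩, hmono⟩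
    · rintro ⟨hmem, hmono⟩
      exact ⟨⟨fun r => ⟨(hmem r).1, le_trans (hmem r).2 (Nat.le_succ b)⟩, hmono⟩,
        (hmem (Fin.last t)).2⟩
  · rw [E, Finset.mul_sum]
    refine Finset.sum_nbij' (i := fun f => f ∘ Fin.castSucc) (j := fun g => Fin.snoc g (b+1))
      ?_ ?_ ?_ ?_ ?_
    · intro f hf
      simp only [Finset.mem_filter, Fintype.mem_piFinset, Finset.mem_Icc] at hf ⊢
      exact ⟨fun r => hf.1.1 r.castSucc, hf.1.2.comp Fin.strictMono_castSucc.monotone⟩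
    · intro g hg
      simp only [Finset.mem_filter, Fintype.mem_piFinset, Finset.mem_Icc] at hg ⊢
      refine ⟨⟨?_, monotone_snoc hg.2 (fun r => (hg.1 r).2)⟩, by simp⟩
      intro r
      induction r using Fin.lastCases with
      | last => simpa using hab
      | cast r => simpa using hg.1 r
    · intro f hf
      simp only [Finset.mem_filter, Fintype.mem_piFinset, Finset.mem_Icc] at hf
      have hlast : f (Fin.last t) = b + 1 := by
        have := (hf.1.1 (Fin.last t)).2
        have := hf.2
        omega
      rw [← hlast]
      exact Fin.snoc_init_self f
    · intro g hg
      funext r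
      simp [Fin.snoc_castSucc]
    · intro f hf
      simp only [Finset.mem_filter, Fintype.mem_piFinset, Finset.mem_Icc] at hf
      have hlast : f (Fin.last t) = b + 1 := by
        have := (hf.1.1 (Fin.last t)).2
        have := hf.2
        omega
      rw [Fin.prod_univ_castSucc, hlast]
      exact mul_comm _ _

lemma E_shift (x : ℕ → ℂ) (t a b : ℕ) :
    E (fun i => x (i+1)) t a b = E x t (a+1) (b+1) := by
  rw [E, E]
  refine Finset.sum_nbij' (i := fun f => fun r => f r + 1)
    (j := fun g => fun r => g r - 1) ?_ ?_ ?_ ?_ ?_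
  · intro f hf
    simp only [Finset.mem_filter, Fintype.mem_piFinset, Finset.mem_Icc] at hf ⊢
    refine ⟨fun r => ⟨by have := (hf.1 r).1; omega, by have := (hf.1 r).2; omega⟩, ?_⟩
    intro i j hij
    exact Nat.succ_le_succ (hf.2 hij)
  · intro g hg
    simp only [Finset.mem_filter, Fintype.mem_piFinset, Finset.mem_Icc] at hg ⊢
    refine ⟨fun r => ⟨by have := (hg.1 r).1; omega, by have := (hg.1 r).2; omega⟩, ?_⟩
    intro i j hij
    exact Nat.sub_le_sub_right (hg.2 hij) 1
  · intro f hf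
    funext r
    show f r + 1 - 1 = f r
    omega
  · intro g hg
    simp only [Finset.mem_filter, Fintype.mem_piFinset, Finset.mem_Icc] at hg
    funext r
    show g r - 1 + 1 = g r
    have := (hg.1 r).1
    omega
  · intro f hf
    rfl

lemma E_star (β : ℂ) (hβ : ∀ k : ℕ, β ≠ -(k : ℂ)) :
    ∀ t a c : ℕ, a ≤ c →
      ((c + 1 - a : ℕ) : ℂ) * E (fun i => (β + i)⁻¹) t a (c+1)
        = (β + ((c+1 : ℕ) : ℂ)) * E (fun i => (β + i)⁻¹) t a c
          - (β + (a : ℕ)) * E (fun i => (β + i)⁻¹) t (a+1) (c+1) := by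
  have hx : ∀ k : ℕ, β + (k : ℂ) ≠ 0 := by
    intro k h
    exact hβ k (by rw [add_eq_zero_iff_eq_neg] at h; exact h)
  intro t
  induction t with
  | zero =>
      intro a c hac
      rw [E_zero, E_zero, E_zero]
      have : ((c + 1 - a : ℕ) : ℂ) = ((c:ℂ) + 1) - (a : ℂ) := by
        push_cast [Nat.cast_sub (by omega : a ≤ c + 1)]
        ring
      rw [this]
      push_cast
      ring
  | succ t ih =>
      intro a c hac
      have h1 : E (fun i => (β + i)⁻¹) (t+1) a c
          = (β + (a:ℕ))⁻¹ * E (fun i => (β + i)⁻¹) t a c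
            + E (fun i => (β + i)⁻¹) (t+1) (a+1) c := E_split_low _ t a c hac
      have h2 : E (fun i => (β + i)⁻¹) (t+1) (a+1) (c+1)
          = E (fun i => (β + i)⁻¹) (t+1) (a+1) c
            + (β + ((c+1:ℕ):ℂ))⁻¹ * E (fun i => (β + i)⁻¹) t (a+1) (c+1) :=
        E_split_high _ t (a+1) c (by omega)
      have hL : E (fun i => (β + i)⁻¹) (t+1) a (c+1)
          = (β + (a:ℕ))⁻¹ * E (fun i => (β + i)⁻¹) t a (c+1)
            + E (fun i => (β + i)⁻¹) (t+1) (a+1) (c+1) := E_split_low _ t a (c+1) (by omega)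
      have hIH := ih a c hac
      have e1 : (β + (a:ℕ)) * (β + (a:ℕ))⁻¹ = 1 := mul_inv_cancel₀ (hx a)
      have e2 : (β + ((c+1:ℕ):ℂ)) * (β + ((c+1:ℕ):ℂ))⁻¹ = 1 := mul_inv_cancel₀ (hx (c+1))
      have e3 : (β + ((c+1:ℕ):ℂ)) = (β + (a:ℕ)) + ((c + 1 - a : ℕ) : ℂ) := by
        push_cast [Nat.cast_sub (by omega : a ≤ c + 1)]
        ring
      rw [hL, h2, h1]
      set A := E (fun i => (β + i)⁻¹) t a c
      set B := E (fun i => (β + i)⁻¹) t (a+1) (c+1)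
      set Cc := E (fun i => (β + i)⁻¹) t a (c+1)
      set D := E (fun i => (β + i)⁻¹) (t+1) (a+1) c
      linear_combination (β + (a:ℕ))⁻¹ * hIH - B * e1 + B * e2
        - (D + (β + ((c+1:ℕ):ℂ))⁻¹ * B) * e3

lemma master (t : ℕ) : ∀ (q : ℕ) (β : ℂ), (∀ k : ℕ, β ≠ -(k:ℂ)) →
    ∑ m ∈ Finset.range (q+1), (q.choose m : ℂ) * (-1)^m / (β + m)^(t+1)
      = (q.factorial : ℂ) / (∏ j ∈ Finset.range (q+1), (β + j))
          * E (fun i => (β + i)⁻¹) t 0 q := by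
  intro q
  induction q with
  | zero =>
      intro β hβ
      have hb : β ≠ 0 := by simpa using hβ 0
      simp only [Finset.sum_range_one, Finset.prod_range_one, E_const, Nat.choose_self,
        Nat.cast_one, pow_zero, Nat.cast_zero, add_zero, Nat.factorial_zero, one_mul, mul_one, zero_add]
      rw [inv_pow]
      field_simp
      rw [pow_succ]
      ring
  | succ q ih =>
      intro β hβ
      have hx : ∀ k : ℕ, β + (k : ℂ) ≠ 0 := by
        intro k h
        exact hβ k (by rw [add_eq_zero_iff_eq_neg] at h; exact h)
      have hβ' : ∀ k : ℕ, β + 1 ≠ -(k : ℂ) := by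
        intro k h
        have h2 : β = -(k:ℂ) - 1 := eq_sub_of_add_eq h
        exact hβ (k+1) (by push_cast; rw [h2]; ring)
      have key : ∀ m : ℕ, (((q+1).choose (m+1) : ℕ) : ℂ) * (-1)^(m+1) / (β + ((m+1 : ℕ):ℂ))^(t+1)
          = -((q.choose m : ℂ) * (-1)^m / ((β+1) + m)^(t+1))
            + (q.choose (m+1) : ℂ) * (-1)^(m+1) / (β + ((m+1 : ℕ):ℂ))^(t+1) := by
        intro m
        rw [Nat.choose_succ_succ]
        have h2 : (β + ((m+1 : ℕ):ℂ)) = ((β+1) + (m:ℂ)) := by push_cast; ring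
        rw [h2]
        push_cast
        ring
      have hpas : ∑ m ∈ Finset.range (q+2), (((q+1).choose m : ℕ) : ℂ) * (-1)^m / (β + m)^(t+1)
          = (∑ m ∈ Finset.range (q+1), (q.choose m : ℂ) * (-1)^m / (β + m)^(t+1))
            - ∑ m ∈ Finset.range (q+1), (q.choose m : ℂ) * (-1)^m / ((β+1) + m)^(t+1) := by
        rw [Finset.sum_range_succ'
          (fun m => (((q+1).choose m : ℕ) : ℂ) * (-1)^m / (β + m)^(t+1)) (q+1)]
        rw [Finset.sum_congr rfl (fun m _ => key m)]
        rw [Finset.sum_add_distrib, Finset.sum_neg_distrib]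
        have hback : (∑ m ∈ Finset.range (q+1),
              (q.choose (m+1) : ℂ) * (-1)^(m+1) / (β + ((m+1 : ℕ):ℂ))^(t+1))
            + (q.choose 0 : ℂ) * (-1)^0 / (β + ((0:ℕ):ℂ))^(t+1)
            = ∑ m ∈ Finset.range (q+1), (q.choose m : ℂ) * (-1)^m / (β + m)^(t+1) := by
          rw [← Finset.sum_range_succ'
            (fun m => (q.choose m : ℂ) * (-1)^m / (β + m)^(t+1)) (q+1)]
          rw [Finset.sum_range_succ]
          simp [Nat.choose_succ_self]
        have hf0 : (((q+1).choose 0 : ℕ) : ℂ) * (-1)^0 / (β + ((0:ℕ):ℂ))^(t+1)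
            = (q.choose 0 : ℂ) * (-1)^0 / (β + ((0:ℕ):ℂ))^(t+1) := by norm_num
        linear_combination hback + hf0
      rw [hpas, ih β hβ, ih (β+1) hβ']
      have hshift : E (fun i => ((β+1) + (i:ℂ))⁻¹) t 0 q = E (fun i => (β + i)⁻¹) t 1 (q+1) := by
        have hfe : (fun i : ℕ => ((β+1) + (i:ℂ))⁻¹)
            = (fun i : ℕ => (β + (((i+1) : ℕ):ℂ))⁻¹) := by
          funext i; push_cast; ring_nf
        rw [hfe]
        exact E_shift (fun i => (β + i)⁻¹) t 0 q
      have hstar := E_star β hβ t 0 q (Nat.zero_le q)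
      simp only [Nat.sub_zero, Nat.cast_zero, add_zero] at hstar
      have hprod1 : ∏ j ∈ Finset.range (q+2), (β + j)
          = (∏ j ∈ Finset.range (q+1), (β + j)) * (β + ((q+1 : ℕ):ℂ)) :=
        Finset.prod_range_succ _ _
      have hQrel : β * ∏ j ∈ Finset.range (q+1), ((β+1) + (j:ℂ))
          = (∏ j ∈ Finset.range (q+1), (β + j)) * (β + ((q+1 : ℕ):ℂ)) := by
        rw [← hprod1, Finset.prod_range_succ' (fun j => (β + (j:ℂ))) (q+1)]
        rw [mul_comm]
        congr 1
        · refine Finset.prod_congr rfl (fun j _ => ?_)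
          push_cast; ring
        · simp
      have hP : (∏ j ∈ Finset.range (q+1), (β + (j:ℂ))) ≠ 0 :=
        Finset.prod_ne_zero_iff.mpr (fun j _ => hx j)
      have hQ : (∏ j ∈ Finset.range (q+1), ((β+1) + (j:ℂ))) ≠ 0 := by
        intro h
        rw [h, mul_zero] at hQrel
        exact (mul_ne_zero hP (hx (q+1))) hQrel.symm
      have hK : β + ((q:ℂ)+1) ≠ 0 := by
        have h := hx (q+1); push_cast at h; exact h
      rw [hshift, hprod1, Nat.factorial_succ]
      push_cast
      push_cast at hstar hQrel
      have hfinal : ∀ (P Q K E1 E2 E3 F : ℂ), P ≠ 0 → Q ≠ 0 → K ≠ 0 →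
          β * Q = P * K → ((q:ℂ)+1) * E1 = K * E2 - β * E3 →
          (((q:ℂ)+1) * F) / (P * K) * E1 = F / P * E2 - F / Q * E3 := by
        intro P Q K E1 E2 E3 F hP' hQ' hK' hrel hst
        simp only [div_mul_eq_mul_div]
        rw [div_sub_div _ _ hP' hQ', div_eq_div_iff (mul_ne_zero hP' hK') (mul_ne_zero hP' hQ')]
        linear_combination F*P*Q*hst - F*E3*P*hrel
      exact (hfinal _ _ _ _ _ _ _ hP hQ hK hQrel hstar).symm

lemma E_eq_finsum (x : ℕ → ℂ) (t q : ℕ) :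
    ∑ f ∈ Finset.univ.filter (fun f : Fin t → Fin (q+1) => Monotone f), ∏ r, x ((f r : ℕ))
      = E x t 0 q := by
  rw [E]
  refine Finset.sum_nbij' (i := fun f => fun r => ((f r : ℕ)))
    (j := fun g => fun r => (⟨min (g r) q, Nat.lt_succ_of_le (min_le_right _ _)⟩ : Fin (q+1)))
    ?_ ?_ ?_ ?_ ?_
  · intro f hf
    simp only [Finset.mem_filter, Finset.mem_univ, true_and] at hf
    simp only [Finset.mem_filter, Fintype.mem_piFinset, Finset.mem_Icc]
    exact ⟨fun r => ⟨Nat.zero_le _, Fin.is_le (f r)⟩, fun i j hij => Fin.le_def.mp (hf hij)⟩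
  · intro g hg
    simp only [Finset.mem_filter, Fintype.mem_piFinset, Finset.mem_Icc] at hg
    simp only [Finset.mem_filter, Finset.mem_univ, true_and]
    intro i j hij
    simp only [Fin.mk_le_mk]
    exact min_le_min (hg.2 hij) le_rfl
  · intro f hf
    funext r
    apply Fin.ext
    simp [Nat.min_eq_left (Fin.is_le (f r))]
  · intro g hg
    simp only [Finset.mem_filter, Fintype.mem_piFinset, Finset.mem_Icc] at hg
    funext r
    simp [Nat.min_eq_left (hg.1 r).2]
  · intro f hf
    rfl

end ABSMH

/-- For β ∉ {0,-1,-2,...}, q ≥ 0 and s ≥ 2,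
    ∑_{m=0}^q C(q,m)(-1)^m/(β+m)^s
      = (q!/(β)_{q+1}) ∑_{0 ≤ i₁ ≤ ... ≤ i_{s-1} ≤ q} ∏_r 1/(β+i_r). -/
theorem alternating_binomial_sum_multiple_harmonic
    (β : ℂ) (hβ : ∀ k : ℕ, β ≠ -(k : ℂ)) (q : ℕ) (s : ℕ) (hs : 2 ≤ s) :
    ∑ m ∈ Finset.range (q + 1), (Nat.choose q m : ℂ) * (-1) ^ m / (β + m) ^ s
      = (Nat.factorial q : ℂ) / (∏ j ∈ Finset.range (q + 1), (β + j)) *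
        ∑ f ∈ Finset.univ.filter (fun f : Fin (s - 1) → Fin (q + 1) => Monotone f),
          ∏ r, (β + ((f r : ℕ) : ℂ))⁻¹ := by
  obtain ⟨t, rfl⟩ : ∃ t, s = t + 1 := ⟨s - 1, by omega⟩
  show ∑ m ∈ Finset.range (q + 1), (Nat.choose q m : ℂ) * (-1) ^ m / (β + m) ^ (t+1)
      = (Nat.factorial q : ℂ) / (∏ j ∈ Finset.range (q + 1), (β + j)) *
        ∑ f ∈ Finset.univ.filter (fun f : Fin t → Fin (q + 1) => Monotone f),
          ∏ r, (β + ((f r : ℕ) : ℂ))⁻¹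
  rw [ABSMH.E_eq_finsum (fun i => (β + (i:ℂ))⁻¹) t q]
  exact ABSMH.master t q β hβ
end

section
/- Define R(q, β) = (q! / (β)_{q+1}) · ∑_{0 ≤ i_1 ≤ ... ≤ i_{s-1} ≤ q} ∏_{r=1}^{s-1} 1/(β + i_r) for a fixed integer s ≥ 2 (interpreting the sum as 1 when s = 1). Then for every complex β not in {0, -1, -2, ...} and every integer q ≥ 0, R(q+1, β) = R(q, β) − R(q, β+1). -/
open scoped Classical

noncomputable section

/-- R(q,β) = (q!/(β)_{q+1}) ∑_{0 ≤ i₁ ≤ ... ≤ i_{s-1} ≤ q} ∏_r 1/(β+i_r). -/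
def R (s : ℕ) (q : ℕ) (β : ℂ) : ℂ :=
  (Nat.factorial q : ℂ) / (∏ j ∈ Finset.range (q + 1), (β + j)) *
    ∑ f ∈ Finset.univ.filter (fun f : Fin (s - 1) → Fin (q + 1) => Monotone f),
      ∏ r, (β + ((f r : ℕ) : ℂ))⁻¹

open Finset

/-- Auxiliary sum over monotone k-tuples with values in Fin n. -/
def Fs (k n : ℕ) (β : ℂ) : ℂ :=
  ∑ f ∈ Finset.univ.filter (fun f : Fin k → Fin n => Monotone f),
    ∏ r, (β + ((f r : ℕ) : ℂ))⁻¹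

lemma partS (m q : ℕ) (β : ℂ) :
    ∑ f ∈ (Finset.univ.filter (fun f : Fin (m+1) → Fin (q+2) => Monotone f)).filter
        (fun f => f (Fin.last m) ≠ Fin.last (q+1)),
      ∏ r, (β + ((f r : ℕ) : ℂ))⁻¹ = Fs (m+1) (q+1) β := by
  rw [Fs]
  have hlt : ∀ f : Fin (m+1) → Fin (q+2), Monotone f → f (Fin.last m) ≠ Fin.last (q+1) →
      ∀ r, ((f r : ℕ) < q + 1) := by
    intro f hf hne r
    have h1 : f r ≤ f (Fin.last m) := hf (Fin.le_last r)
    have h2 : f (Fin.last m) < Fin.last (q+1) := lt_of_le_of_ne (Fin.le_last _) hne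
    have := lt_of_le_of_lt h1 h2
    simpa [Fin.lt_def] using this
  refine Finset.sum_nbij'
    (fun f => fun r => if h : (f r : ℕ) < q + 1 then Fin.castLT (f r) h else 0)
    (fun g => Fin.castSucc ∘ g) ?_ ?_ ?_ ?_ ?_
  · intro f hf
    simp only [mem_filter, mem_univ, true_and] at hf ⊢
    have hl := hlt f hf.1 hf.2
    intro a b hab
    have := hf.1 hab
    beta_reduce
    rw [dif_pos (hl a), dif_pos (hl b), Fin.le_def, Fin.coe_castLT, Fin.coe_castLT]
    exact this
  · intro g hg
    simp only [mem_filter, mem_univ, true_and] at hg ⊢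
    constructor
    · intro a b hab
      exact Fin.castSucc_le_castSucc_iff.mpr (hg hab)
    · exact Fin.ne_last_of_lt (Fin.castSucc_lt_last _)
  · intro f hf
    simp only [mem_filter, mem_univ, true_and] at hf
    have hl := hlt f hf.1 hf.2
    funext r
    simp only [Function.comp_apply]
    rw [dif_pos (hl r)]
    ext
    simp
  · intro g _
    funext r
    have : ((Fin.castSucc (g r) : ℕ) < q + 1) := by simpa using (g r).isLt
    simp only [Function.comp_apply, this, dif_pos]
    ext
    simp
  · intro f hf
    simp only [mem_filter, mem_univ, true_and] at hf
    have hl := hlt f hf.1 hf.2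
    refine Finset.prod_congr rfl fun r _ => ?_
    congr 2
    beta_reduce
    rw [dif_pos (hl r), Fin.coe_castLT]

lemma partA (m q : ℕ) (β : ℂ) :
    ∑ f ∈ (Finset.univ.filter (fun f : Fin (m+1) → Fin (q+2) => Monotone f)).filter
        (fun f => f (Fin.last m) = Fin.last (q+1)),
      ∏ r, (β + ((f r : ℕ) : ℂ))⁻¹
      = (β + ((q+1 : ℕ) : ℂ))⁻¹ * Fs m (q+2) β := by
  rw [Fs, Finset.mul_sum]
  refine Finset.sum_nbij'
    (fun f => f ∘ Fin.castSucc)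
    (fun h => Fin.snoc h (Fin.last (q+1))) ?_ ?_ ?_ ?_ ?_
  · intro f hf
    simp only [mem_filter, mem_univ, true_and] at hf ⊢
    intro a b hab
    exact hf.1 (Fin.castSucc_le_castSucc_iff.mpr hab)
  · intro h hh
    simp only [mem_filter, mem_univ, true_and] at hh ⊢
    refine ⟨?_, by simp [Fin.snoc_last]⟩
    intro a b hab
    induction b using Fin.lastCases with
    | last => simp [Fin.snoc_last, Fin.le_last]
    | cast b' =>
      have ha : a ≠ Fin.last m :=
        Fin.ne_last_of_lt (lt_of_le_of_lt hab (Fin.castSucc_lt_last b'))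
      obtain ⟨a', rfl⟩ := Fin.exists_castSucc_eq.mpr ha
      simp only [Fin.snoc_castSucc]
      exact hh (Fin.castSucc_le_castSucc_iff.mp hab)
  · intro f hf
    simp only [mem_filter, mem_univ, true_and] at hf
    funext r
    induction r using Fin.lastCases with
    | last => simp [Fin.snoc_last, hf.2]
    | cast r' => simp [Fin.snoc_castSucc]
  · intro h _
    funext r
    simp [Fin.snoc_castSucc]
  · intro f hf
    simp only [mem_filter, mem_univ, true_and] at hf
    rw [Fin.prod_univ_castSucc (fun r => (β + ((f r : ℕ) : ℂ))⁻¹)]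
    rw [hf.2]
    simp only [Fin.val_last, Function.comp]
    push_cast
    ring

lemma partT (m q : ℕ) (β : ℂ) :
    ∑ f ∈ (Finset.univ.filter (fun f : Fin (m+1) → Fin (q+2) => Monotone f)).filter
        (fun f => f 0 ≠ 0),
      ∏ r, (β + ((f r : ℕ) : ℂ))⁻¹ = Fs (m+1) (q+1) (β + 1) := by
  rw [Fs]
  have hpos : ∀ f : Fin (m+1) → Fin (q+2), Monotone f → f 0 ≠ 0 →
      ∀ r, (f r ≠ 0) := by
    intro f hf h0 r hr
    apply h0
    have : f 0 ≤ f r := hf (Fin.zero_le r)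
    rw [hr] at this
    exact le_antisymm this (Fin.zero_le _)
  refine Finset.sum_nbij'
    (fun f => fun r => if h : f r ≠ 0 then Fin.pred (f r) h else 0)
    (fun g => Fin.succ ∘ g) ?_ ?_ ?_ ?_ ?_
  · intro f hf
    simp only [mem_filter, mem_univ, true_and] at hf ⊢
    have hp := hpos f hf.1 hf.2
    intro a b hab
    have hab' : (f a : ℕ) ≤ (f b : ℕ) := hf.1 hab
    beta_reduce
    rw [dif_pos (hp a), dif_pos (hp b), Fin.le_def, Fin.coe_pred, Fin.coe_pred]
    omega
  · intro g hg
    simp only [mem_filter, mem_univ, true_and] at hg ⊢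
    constructor
    · intro a b hab
      exact Fin.succ_le_succ_iff.mpr (hg hab)
    · exact Fin.succ_ne_zero _
  · intro f hf
    simp only [mem_filter, mem_univ, true_and] at hf
    have hp := hpos f hf.1 hf.2
    funext r
    simp only [Function.comp_apply]
    rw [dif_pos (hp r), Fin.succ_pred]
  · intro g _
    funext r
    have : Fin.succ (g r) ≠ 0 := Fin.succ_ne_zero _
    simp [this]
  · intro f hf
    simp only [mem_filter, mem_univ, true_and] at hf
    have hp := hpos f hf.1 hf.2
    refine Finset.prod_congr rfl fun r _ => ?_
    have h1 : 1 ≤ (f r : ℕ) := by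
      have := Fin.pos_iff_ne_zero.mpr (hp r)
      exact Fin.lt_def.mp this
    congr 1
    beta_reduce
    rw [dif_pos (hp r), Fin.coe_pred]
    push_cast [h1]
    ring

lemma partB (m q : ℕ) (β : ℂ) :
    ∑ f ∈ (Finset.univ.filter (fun f : Fin (m+1) → Fin (q+2) => Monotone f)).filter
        (fun f => f 0 = 0),
      ∏ r, (β + ((f r : ℕ) : ℂ))⁻¹ = β⁻¹ * Fs m (q+2) β := by
  rw [Fs, Finset.mul_sum]
  refine Finset.sum_nbij'
    (fun f => f ∘ Fin.succ)
    (fun h => Fin.cons 0 h) ?_ ?_ ?_ ?_ ?_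
  · intro f hf
    simp only [mem_filter, mem_univ, true_and] at hf ⊢
    intro a b hab
    exact hf.1 (Fin.succ_le_succ_iff.mpr hab)
  · intro h hh
    simp only [mem_filter, mem_univ, true_and] at hh ⊢
    constructor
    · intro a b hab
      induction a using Fin.cases with
      | zero => simp [Fin.cons_zero, Fin.zero_le]
      | succ a' =>
        have hb : b ≠ 0 := by
          intro h0
          rw [h0] at hab
          exact absurd (le_antisymm hab (Fin.zero_le _)) (Fin.succ_ne_zero a')
        obtain ⟨b', rfl⟩ := Fin.exists_succ_eq.mpr hb
        simp only [Fin.cons_succ]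
        exact hh (Fin.succ_le_succ_iff.mp hab)
    · simp [Fin.cons_zero]
  · intro f hf
    simp only [mem_filter, mem_univ, true_and] at hf
    funext r
    induction r using Fin.cases with
    | zero => simp [Fin.cons_zero, hf.2]
    | succ r' => simp [Fin.cons_succ]
  · intro h _
    funext r
    simp [Fin.cons_succ]
  · intro f hf
    simp only [mem_filter, mem_univ, true_and] at hf
    rw [Fin.prod_univ_succ (fun r => (β + ((f r : ℕ) : ℂ))⁻¹)]
    rw [hf.2]
    simp [Function.comp]

lemma key1 (m q : ℕ) (β : ℂ) :
    Fs (m+1) (q+2) β = Fs (m+1) (q+1) β + (β + ((q+1 : ℕ) : ℂ))⁻¹ * Fs m (q+2) β := by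
  rw [Fs, ← Finset.sum_filter_add_sum_filter_not _
    (fun f : Fin (m+1) → Fin (q+2) => f (Fin.last m) = Fin.last (q+1)),
    partA, partS]
  ring

lemma key2 (m q : ℕ) (β : ℂ) :
    Fs (m+1) (q+2) β = Fs (m+1) (q+1) (β+1) + β⁻¹ * Fs m (q+2) β := by
  rw [Fs, ← Finset.sum_filter_add_sum_filter_not _
    (fun f : Fin (m+1) → Fin (q+2) => f 0 = 0),
    partB, partT]
  ring

/-- For fixed s ≥ 2, β ∉ {0,-1,-2,...} and q ≥ 0: R(q+1,β) = R(q,β) - R(q,β+1). -/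
theorem R_recursion
    (s : ℕ) (hs : 2 ≤ s) (β : ℂ) (hβ : ∀ k : ℕ, β ≠ -(k : ℂ)) (q : ℕ) :
    R s (q + 1) β = R s q β - R s q (β + 1) := by
  obtain ⟨m, rfl⟩ : ∃ m, s = m + 2 := ⟨s - 2, by omega⟩
  have hne : ∀ k : ℕ, β + (k : ℂ) ≠ 0 := by
    intro k h
    exact hβ k (eq_neg_of_add_eq_zero_left h)
  have hβ0 : β ≠ 0 := by simpa using hne 0
  have hq1 : β + ((q+1 : ℕ) : ℂ) ≠ 0 := hne (q+1)
  have hP : ∀ n : ℕ, (∏ j ∈ Finset.range n, (β + (j : ℂ))) ≠ 0 := by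
    intro n
    exact Finset.prod_ne_zero_iff.mpr fun j _ => hne j
  have hU : R (m+2) (q+1) β
      = ((q+1).factorial : ℂ) / (∏ j ∈ Finset.range (q+2), (β + j)) * Fs (m+1) (q+2) β := rfl
  have hS : R (m+2) q β
      = (q.factorial : ℂ) / (∏ j ∈ Finset.range (q+1), (β + j)) * Fs (m+1) (q+1) β := rfl
  have hT : R (m+2) q (β+1)
      = (q.factorial : ℂ) / (∏ j ∈ Finset.range (q+1), (β + 1 + j)) * Fs (m+1) (q+1) (β+1) := rfl
  rw [hU, hS, hT, key1 m q β]
  have e1 : (∏ j ∈ Finset.range (q+2), (β + (j : ℂ)))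
      = (∏ j ∈ Finset.range (q+1), (β + (j : ℂ))) * (β + ((q+1 : ℕ) : ℂ)) :=
    Finset.prod_range_succ _ _
  have e2 : (∏ j ∈ Finset.range (q+2), (β + (j : ℂ)))
      = β * (∏ j ∈ Finset.range (q+1), (β + 1 + (j : ℂ))) := by
    rw [Finset.prod_range_succ']
    have : ∀ j ∈ Finset.range (q+1), (β + ((j+1 : ℕ) : ℂ)) = (β + 1 + (j : ℂ)) := by
      intro j _
      push_cast
      ring
    rw [Finset.prod_congr rfl this]
    push_cast
    ring
  have hT2 : Fs (m+1) (q+1) (β+1)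
      = Fs (m+1) (q+1) β + (β + ((q+1:ℕ):ℂ))⁻¹ * Fs m (q+2) β - β⁻¹ * Fs m (q+2) β := by
    have h := key2 m q β
    rw [key1 m q β] at h
    linear_combination -h
  rw [hT2, e1]
  have hP1 := hP (q+1)
  have hP2 : (∏ j ∈ Finset.range (q+1), (β + 1 + (j : ℂ))) ≠ 0 := by
    intro h
    apply hP (q+2)
    rw [e2, h, mul_zero]
  have hfact : (((q+1).factorial : ℕ) : ℂ) = ((q : ℂ) + 1) * (q.factorial : ℂ) := by
    rw [Nat.factorial_succ]
    push_cast
    ring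
  rw [hfact]
  have e2' : (∏ j ∈ Finset.range (q+1), (β + 1 + (j : ℂ)))
      = (∏ j ∈ Finset.range (q+1), (β + (j : ℂ))) * (β + ((q+1:ℕ):ℂ)) / β := by
    rw [eq_div_iff hβ0]
    linear_combination e1 - e2
  rw [e2']
  have hq1' : ((q+1 : ℕ) : ℂ) = (q : ℂ) + 1 := by push_cast; ring
  rw [hq1'] at hq1 ⊢
  field_simp
  ring
end
end

section
/- Let f_n = 1/(β + n) with β avoiding nonpositive integers, and S_a^b(t) = ∑_{a ≤ i_1 ≤ ... ≤ i_t ≤ b} ∏_r f_{i_r} (with S_a^b(0) = 1). Then for integers 1 ≤ a ≤ b and t ≥ 0, S_{a-1}^{b+1}(t) = ∑_{u+v+w=t} f_{a-1}^u · S_a^b(v) · f_{b+1}^w. -/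
open scoped Classical

noncomputable section

/-- S_a^b(t) = ∑_{a ≤ i₁ ≤ ... ≤ i_t ≤ b} ∏_r 1/(β + i_r), with S_a^b(0) = 1. -/
def S (β : ℂ) (a b t : ℕ) : ℂ :=
  ∑ f ∈ Finset.univ.filter
      (fun f : Fin t → {x // x ∈ Finset.Icc a b} => Monotone f),
    ∏ r, (β + ((f r : ℕ) : ℂ))⁻¹

lemma S_zero (β : ℂ) (a b : ℕ) : S β a b 0 = 1 := by
  classical
  rw [S]
  rw [Finset.filter_true_of_mem (fun f _ => (by intro i j _; exact i.elim0 : Monotone f))]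
  simp

lemma S_top (β : ℂ) (a b t : ℕ) (hab : a ≤ b + 1) :
    S β a (b + 1) (t + 1)
      = S β a b (t + 1) + (β + ((b + 1 : ℕ) : ℂ))⁻¹ * S β a (b + 1) t := by
  classical
  have h1 : ∑ f ∈ (((Finset.univ :
        Finset (Fin (t+1) → {x // x ∈ Finset.Icc a (b+1)})).filter
        (fun f => Monotone f)).filter
        (fun f => ((f (Fin.last t) : ℕ) = b + 1))), ∏ r, (β + ((f r : ℕ) : ℂ))⁻¹
      = (β + ((b + 1 : ℕ) : ℂ))⁻¹ * S β a (b + 1) t := by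
    rw [S, Finset.mul_sum]
    refine Finset.sum_nbij' (fun f => Fin.init f)
      (fun g => Fin.snoc g ⟨b + 1, by simp [Finset.mem_Icc, hab]⟩) ?_ ?_ ?_ ?_ ?_
    · intro f hf
      simp only [Finset.mem_filter, Finset.mem_univ, true_and] at hf ⊢
      intro i j hij
      exact hf.1 (Fin.castSucc_le_castSucc_iff.mpr hij)
    · intro g hg
      simp only [Finset.mem_filter, Finset.mem_univ, true_and] at hg ⊢
      constructor
      · intro i j hij
        rcases Fin.eq_castSucc_or_eq_last j with ⟨j', rfl⟩ | rfl
        · rcases Fin.eq_castSucc_or_eq_last i with ⟨i', rfl⟩ | rfl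
          · rw [Fin.snoc_castSucc, Fin.snoc_castSucc]
            exact hg (Fin.castSucc_le_castSucc_iff.mp hij)
          · rw [Fin.le_antisymm hij (Fin.le_last _)]
        · rw [Fin.snoc_last]
          rcases Fin.eq_castSucc_or_eq_last i with ⟨i', rfl⟩ | rfl
          · rw [Fin.snoc_castSucc]
            exact Subtype.coe_le_coe.mp (by
              simpa using (Finset.mem_Icc.mp (g i').2).2)
          · rw [Fin.snoc_last]
      · rw [Fin.snoc_last]
    · intro f hf
      simp only [Finset.mem_filter, Finset.mem_univ, true_and] at hf
      have h : (⟨b + 1, by simp [Finset.mem_Icc, hab]⟩ :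
          {x // x ∈ Finset.Icc a (b+1)}) = f (Fin.last t) := by
        ext; exact hf.2.symm
      show Fin.snoc (Fin.init f) _ = f
      rw [h]
      exact Fin.snoc_init_self f
    · intro g hg
      exact Fin.init_snoc _ _
    · intro f hf
      simp only [Finset.mem_filter, Finset.mem_univ, true_and] at hf
      rw [Fin.prod_univ_castSucc, hf.2, mul_comm]
      rfl
  have h2 : ∑ f ∈ (((Finset.univ :
        Finset (Fin (t+1) → {x // x ∈ Finset.Icc a (b+1)})).filter
        (fun f => Monotone f)).filter
        (fun f => ¬((f (Fin.last t) : ℕ) = b + 1))), ∏ r, (β + ((f r : ℕ) : ℂ))⁻¹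
      = S β a b (t + 1) := by
    rw [S]
    have hle : ∀ f : Fin (t+1) → {x // x ∈ Finset.Icc a (b+1)},
        f ∈ (((Finset.univ :
          Finset (Fin (t+1) → {x // x ∈ Finset.Icc a (b+1)})).filter
          (fun f => Monotone f)).filter
          (fun f => ¬((f (Fin.last t) : ℕ) = b + 1))) →
        ∀ r, (f r : ℕ) ∈ Finset.Icc a b := by
      intro f hf r
      simp only [Finset.mem_filter, Finset.mem_univ, true_and] at hf
      have h1 := (Finset.mem_Icc.mp (f r).2).1
      have h2 := (Finset.mem_Icc.mp (f (Fin.last t)).2).2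
      have h3 : (f r : ℕ) ≤ (f (Fin.last t) : ℕ) := hf.1 (Fin.le_last r)
      have hne := hf.2
      exact Finset.mem_Icc.mpr ⟨h1, by omega⟩
    refine Finset.sum_bij'
      (fun f hf => fun r => (⟨(f r : ℕ), hle f hf r⟩ : {x // x ∈ Finset.Icc a b}))
      (fun g _ => fun r => (⟨(g r : ℕ), by
        have := Finset.mem_Icc.mp (g r).2
        exact Finset.mem_Icc.mpr ⟨this.1, by omega⟩⟩ : {x // x ∈ Finset.Icc a (b+1)}))
      ?_ ?_ ?_ ?_ ?_
    · intro f hf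
      simp only [Finset.mem_filter, Finset.mem_univ, true_and] at hf ⊢
      intro i j hij
      exact hf.1 hij
    · intro g hg
      simp only [Finset.mem_filter, Finset.mem_univ, true_and] at hg ⊢
      refine ⟨fun i j hij => hg hij, ?_⟩
      have := (Finset.mem_Icc.mp (g (Fin.last t)).2).2
      omega
    · intro f hf
      funext r; rfl
    · intro g hg
      funext r; rfl
    · intro f hf
      rfl
  rw [S, ← Finset.sum_filter_add_sum_filter_not
      ((Finset.univ : Finset (Fin (t+1) → {x // x ∈ Finset.Icc a (b+1)})).filter
        (fun f => Monotone f))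
      (fun f => ((f (Fin.last t) : ℕ) = b + 1)),
    h1, h2, add_comm]

lemma S_bot (β : ℂ) (a b t : ℕ) (ha : 1 ≤ a) (hab : a ≤ b) :
    S β (a - 1) b (t + 1)
      = (β + ((a - 1 : ℕ) : ℂ))⁻¹ * S β (a - 1) b t + S β a b (t + 1) := by
  classical
  have habm : a - 1 ≤ b := by omega
  have h1 : ∑ f ∈ (((Finset.univ :
        Finset (Fin (t+1) → {x // x ∈ Finset.Icc (a-1) b})).filter
        (fun f => Monotone f)).filter
        (fun f => ((f 0 : ℕ) = a - 1))), ∏ r, (β + ((f r : ℕ) : ℂ))⁻¹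
      = (β + ((a - 1 : ℕ) : ℂ))⁻¹ * S β (a - 1) b t := by
    rw [S, Finset.mul_sum]
    refine Finset.sum_nbij' (fun f => Fin.tail f)
      (fun g => Fin.cons ⟨a - 1, by simp [Finset.mem_Icc, habm]⟩ g) ?_ ?_ ?_ ?_ ?_
    · intro f hf
      simp only [Finset.mem_filter, Finset.mem_univ, true_and] at hf ⊢
      intro i j hij
      exact hf.1 (Fin.succ_le_succ_iff.mpr hij)
    · intro g hg
      simp only [Finset.mem_filter, Finset.mem_univ, true_and] at hg ⊢
      constructor
      · intro i j hij
        rcases Fin.eq_zero_or_eq_succ i with rfl | ⟨i', rfl⟩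
        · rw [Fin.cons_zero]
          rcases Fin.eq_zero_or_eq_succ j with rfl | ⟨j', rfl⟩
          · rw [Fin.cons_zero]
          · rw [Fin.cons_succ]
            exact Subtype.coe_le_coe.mp (by
              simpa using (Finset.mem_Icc.mp (g j').2).1)
        · rcases Fin.eq_zero_or_eq_succ j with rfl | ⟨j', rfl⟩
          · rw [Fin.le_antisymm hij (Fin.zero_le _)]
          · rw [Fin.cons_succ, Fin.cons_succ]
            exact hg (Fin.succ_le_succ_iff.mp hij)
      · rw [Fin.cons_zero]
    · intro f hf
      simp only [Finset.mem_filter, Finset.mem_univ, true_and] at hf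
      have h : (⟨a - 1, by simp [Finset.mem_Icc, habm]⟩ :
          {x // x ∈ Finset.Icc (a-1) b}) = f 0 := by
        ext; exact hf.2.symm
      show Fin.cons _ (Fin.tail f) = f
      rw [h]
      exact Fin.cons_self_tail f
    · intro g hg
      exact Fin.tail_cons _ _
    · intro f hf
      simp only [Finset.mem_filter, Finset.mem_univ, true_and] at hf
      rw [Fin.prod_univ_succ, hf.2]
      rfl
  have h2 : ∑ f ∈ (((Finset.univ :
        Finset (Fin (t+1) → {x // x ∈ Finset.Icc (a-1) b})).filter
        (fun f => Monotone f)).filter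
        (fun f => ¬((f 0 : ℕ) = a - 1))), ∏ r, (β + ((f r : ℕ) : ℂ))⁻¹
      = S β a b (t + 1) := by
    rw [S]
    have hge : ∀ f : Fin (t+1) → {x // x ∈ Finset.Icc (a-1) b},
        f ∈ (((Finset.univ :
          Finset (Fin (t+1) → {x // x ∈ Finset.Icc (a-1) b})).filter
          (fun f => Monotone f)).filter
          (fun f => ¬((f 0 : ℕ) = a - 1))) →
        ∀ r, (f r : ℕ) ∈ Finset.Icc a b := by
      intro f hf r
      simp only [Finset.mem_filter, Finset.mem_univ, true_and] at hf
      have h1 := (Finset.mem_Icc.mp (f 0).2).1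
      have h2 := (Finset.mem_Icc.mp (f r).2).2
      have h3 : (f 0 : ℕ) ≤ (f r : ℕ) := hf.1 (Fin.zero_le r)
      have hne := hf.2
      exact Finset.mem_Icc.mpr ⟨by omega, h2⟩
    refine Finset.sum_bij'
      (fun f hf => fun r => (⟨(f r : ℕ), hge f hf r⟩ : {x // x ∈ Finset.Icc a b}))
      (fun g _ => fun r => (⟨(g r : ℕ), by
        have := Finset.mem_Icc.mp (g r).2
        exact Finset.mem_Icc.mpr ⟨by omega, this.2⟩⟩ : {x // x ∈ Finset.Icc (a-1) b}))
      ?_ ?_ ?_ ?_ ?_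
    · intro f hf
      simp only [Finset.mem_filter, Finset.mem_univ, true_and] at hf ⊢
      intro i j hij
      exact hf.1 hij
    · intro g hg
      simp only [Finset.mem_filter, Finset.mem_univ, true_and] at hg ⊢
      refine ⟨fun i j hij => hg hij, ?_⟩
      have := (Finset.mem_Icc.mp (g 0).2).1
      omega
    · intro f hf
      funext r; rfl
    · intro g hg
      funext r; rfl
    · intro f hf
      rfl
  rw [S, ← Finset.sum_filter_add_sum_filter_not
      ((Finset.univ : Finset (Fin (t+1) → {x // x ∈ Finset.Icc (a-1) b})).filter
        (fun f => Monotone f))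
      (fun f => ((f 0 : ℕ) = a - 1)),
    h1, h2]

lemma S_top_sum (β : ℂ) (a b : ℕ) (hab : a ≤ b + 1) (t : ℕ) :
    S β a (b + 1) t
      = ∑ r ∈ Finset.HasAntidiagonal.antidiagonal t, S β a b r.1 * (β + ((b + 1 : ℕ) : ℂ))⁻¹ ^ r.2 := by
  induction t with
  | zero => simp [S_zero]
  | succ t ih =>
    rw [S_top β a b t hab, ih, Finset.Nat.antidiagonal_succ' (n := t),
      Finset.sum_cons, Finset.sum_map]
    simp only [Function.Embedding.coeFn_mk, Function.Embedding.prodMap,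
      Function.Embedding.refl_apply, Prod.map, pow_succ, pow_zero, mul_one]
    rw [Finset.mul_sum]
    congr 1
    apply Finset.sum_congr rfl
    intro x _
    ring

lemma S_bot_sum (β : ℂ) (a b : ℕ) (ha : 1 ≤ a) (hab : a ≤ b) (t : ℕ) :
    S β (a - 1) (b + 1) t
      = ∑ p ∈ Finset.HasAntidiagonal.antidiagonal t,
          (β + ((a - 1 : ℕ) : ℂ))⁻¹ ^ p.1 * S β a (b + 1) p.2 := by
  induction t with
  | zero => simp [S_zero]
  | succ t ih =>
    rw [S_bot β a (b + 1) t ha (by omega), ih, Finset.Nat.antidiagonal_succ (n := t),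
      Finset.sum_cons, Finset.sum_map]
    simp only [Function.Embedding.coeFn_mk, Function.Embedding.prodMap,
      Function.Embedding.refl_apply, Prod.map, pow_succ, pow_zero, one_mul]
    rw [Finset.mul_sum]
    rw [add_comm]
    congr 1
    apply Finset.sum_congr rfl
    intro x _
    ring

/-- For 1 ≤ a ≤ b and t ≥ 0,
    S_{a-1}^{b+1}(t) = ∑_{u+v+w=t} f_{a-1}^u S_a^b(v) f_{b+1}^w,
    where f_n = 1/(β+n). -/
theorem S_extend
    (β : ℂ) (hβ : ∀ k : ℕ, β ≠ -(k : ℂ)) (a b t : ℕ) (ha : 1 ≤ a) (hab : a ≤ b) :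
    S β (a - 1) (b + 1) t
      = ∑ p ∈ Finset.HasAntidiagonal.antidiagonal t, ∑ r ∈ Finset.HasAntidiagonal.antidiagonal p.2,
          (β + ((a - 1 : ℕ) : ℂ))⁻¹ ^ p.1 * S β a b r.1 * (β + ((b + 1 : ℕ) : ℂ))⁻¹ ^ r.2 := by
  rw [S_bot_sum β a b ha hab t]
  apply Finset.sum_congr rfl
  intro p _
  rw [S_top_sum β a b (by omega) p.2, Finset.mul_sum]
  apply Finset.sum_congr rfl
  intro r _
  ring

end
end

section
/- For every integer t ≥ 0, every integer q ≥ 0, and complex β avoiding nonpositive integers, with f_n = 1/(β+n) and S_a^b as above: ∑_{v=0}^{t} S_1^q(v) (f_0^{t-v+1} − f_{q+1}^{t-v+1}) = (f_0 − f_{q+1}) · S_0^{q+1}(t) = ((q+1)/(β(β+q+1))) · S_0^{q+1}(t). -/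
open scoped Classical

noncomputable section

lemma S_left (β : ℂ) (a b t : ℕ) (hab : a ≤ b) :
    S β a b (t + 1) = (β + (a : ℂ))⁻¹ * S β a b t + S β (a + 1) b (t + 1) := by
  classical
  have ha : a ∈ Finset.Icc a b := Finset.mem_Icc.mpr ⟨le_rfl, hab⟩
  unfold S
  rw [← Finset.sum_filter_add_sum_filter_not
      (Finset.univ.filter (fun f : Fin (t+1) → {x // x ∈ Finset.Icc a b} => Monotone f))
      (fun f => ((f 0 : ℕ) = a))]
  congr 1
  · rw [Finset.mul_sum]
    refine Finset.sum_bij' (i := fun f _ => (fun r : Fin t => f r.succ))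
      (j := fun g _ => Fin.cases ⟨a, ha⟩ g) ?_ ?_ ?_ ?_ ?_
    · intro f hf
      simp only [Finset.mem_filter, Finset.mem_univ, true_and] at hf ⊢
      exact hf.1.comp Fin.strictMono_succ.monotone
    · intro g hg
      simp only [Finset.mem_filter, Finset.mem_univ, true_and] at hg ⊢
      constructor
      · -- Monotone (Fin.cases ⟨a, ha⟩ g)
        intro x y hxy
        induction x using Fin.cases with
        | zero =>
          induction y using Fin.cases with
          | zero => exact le_rfl
          | succ k =>
            simp only [Fin.cases_zero, Fin.cases_succ]
            exact Subtype.coe_le_coe.mp (by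
              simpa using (Finset.mem_Icc.mp (g k).2).1)
        | succ k =>
          induction y using Fin.cases with
          | zero => exact absurd (Fin.le_zero_iff.mp hxy) (Fin.succ_ne_zero k)
          | succ l =>
            simp only [Fin.cases_succ]
            exact hg (Fin.succ_le_succ_iff.mp hxy)
      · simp
    · intro f hf
      simp only [Finset.mem_filter, Finset.mem_univ, true_and] at hf
      funext x
      induction x using Fin.cases with
      | zero => simp only [Fin.cases_zero]; exact Subtype.ext hf.2.symm
      | succ k => simp
    · intro g hg
      funext r
      simp
    · intro f hf
      simp only [Finset.mem_filter, Finset.mem_univ, true_and] at hf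
      rw [Fin.prod_univ_succ, hf.2]
  · refine Finset.sum_bij' (i := fun f hf => (fun r : Fin (t+1) =>
        (⟨(f r : ℕ), Finset.mem_Icc.mpr ⟨?_, (Finset.mem_Icc.mp (f r).2).2⟩⟩ :
          {x // x ∈ Finset.Icc (a+1) b})))
      (j := fun g hg => (fun r : Fin (t+1) =>
        (⟨(g r : ℕ), Finset.mem_Icc.mpr ⟨?_, (Finset.mem_Icc.mp (g r).2).2⟩⟩ :
          {x // x ∈ Finset.Icc a b})))
      ?_ ?_ ?_ ?_ ?_
    · -- a + 1 ≤ f r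
      simp only [Finset.mem_filter, Finset.mem_univ, true_and] at hf
      have h1 : (f 0 : ℕ) ≤ (f r : ℕ) := Subtype.coe_le_coe.mpr (hf.1 (Fin.zero_le r))
      have h2 : a ≤ (f 0 : ℕ) := (Finset.mem_Icc.mp (f 0).2).1
      omega
    · -- a ≤ g r
      have := (Finset.mem_Icc.mp (g r).2).1
      omega
    · intro f hf
      simp only [Finset.mem_filter, Finset.mem_univ, true_and] at hf ⊢
      intro x y hxy
      exact Subtype.mk_le_mk.mpr (Subtype.coe_le_coe.mpr (hf.1 hxy))
    · intro g hg
      simp only [Finset.mem_filter, Finset.mem_univ, true_and] at hg ⊢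
      constructor
      · intro x y hxy
        exact Subtype.mk_le_mk.mpr (Subtype.coe_le_coe.mpr (hg hxy))
      · have := (Finset.mem_Icc.mp (g 0).2).1
        omega
    · intro f hf; funext r; exact Subtype.ext rfl
    · intro g hg; funext r; exact Subtype.ext rfl
    · intro f hf; rfl

lemma S_right (β : ℂ) (a b t : ℕ) (hab : a ≤ b + 1) :
    S β a (b + 1) (t + 1)
      = (β + ((b + 1 : ℕ) : ℂ))⁻¹ * S β a (b + 1) t + S β a b (t + 1) := by
  classical
  have hb : b + 1 ∈ Finset.Icc a (b + 1) := Finset.mem_Icc.mpr ⟨hab, le_rfl⟩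
  unfold S
  rw [← Finset.sum_filter_add_sum_filter_not _
      (fun f : Fin (t+1) → {x // x ∈ Finset.Icc a (b+1)} => ((f (Fin.last t) : ℕ) = b + 1))]
  congr 1
  · rw [Finset.mul_sum]
    refine Finset.sum_bij' (i := fun f _ => (fun r : Fin t => f r.castSucc))
      (j := fun g _ => Fin.lastCases ⟨b + 1, hb⟩ g) ?_ ?_ ?_ ?_ ?_
    · intro f hf
      simp only [Finset.mem_filter, Finset.mem_univ, true_and] at hf ⊢
      exact hf.1.comp Fin.strictMono_castSucc.monotone
    · intro g hg
      simp only [Finset.mem_filter, Finset.mem_univ, true_and] at hg ⊢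
      constructor
      · intro x y hxy
        induction x using Fin.lastCases with
        | last =>
          have : y = Fin.last t := le_antisymm (Fin.le_last y) hxy
          subst this
          exact le_rfl
        | cast k =>
          induction y using Fin.lastCases with
          | last =>
            simp only [Fin.lastCases_last, Fin.lastCases_castSucc]
            exact Subtype.coe_le_coe.mp (by
              simpa using (Finset.mem_Icc.mp (g k).2).2)
          | cast l =>
            simp only [Fin.lastCases_castSucc]
            exact hg (Fin.castSucc_le_castSucc_iff.mp hxy)
      · simp
    · intro f hf
      simp only [Finset.mem_filter, Finset.mem_univ, true_and] at hf
      funext x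
      induction x using Fin.lastCases with
      | last => simp only [Fin.lastCases_last]; exact Subtype.ext hf.2.symm
      | cast k => simp
    · intro g hg
      funext r
      simp
    · intro f hf
      simp only [Finset.mem_filter, Finset.mem_univ, true_and] at hf
      rw [Fin.prod_univ_castSucc, hf.2, mul_comm]
  · refine Finset.sum_bij' (i := fun f hf => (fun r : Fin (t+1) =>
        (⟨(f r : ℕ), Finset.mem_Icc.mpr ⟨(Finset.mem_Icc.mp (f r).2).1, ?_⟩⟩ :
          {x // x ∈ Finset.Icc a b})))
      (j := fun g hg => (fun r : Fin (t+1) =>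
        (⟨(g r : ℕ), Finset.mem_Icc.mpr ⟨(Finset.mem_Icc.mp (g r).2).1, ?_⟩⟩ :
          {x // x ∈ Finset.Icc a (b+1)})))
      ?_ ?_ ?_ ?_ ?_
    · -- f r ≤ b
      simp only [Finset.mem_filter, Finset.mem_univ, true_and] at hf
      have h1 : (f r : ℕ) ≤ (f (Fin.last t) : ℕ) :=
        Subtype.coe_le_coe.mpr (hf.1 (Fin.le_last r))
      have h2 : (f (Fin.last t) : ℕ) ≤ b + 1 := (Finset.mem_Icc.mp (f (Fin.last t)).2).2
      have h3 := hf.2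
      omega
    · -- g r ≤ b + 1
      have := (Finset.mem_Icc.mp (g r).2).2
      omega
    · intro f hf
      simp only [Finset.mem_filter, Finset.mem_univ, true_and] at hf ⊢
      intro x y hxy
      exact Subtype.mk_le_mk.mpr (Subtype.coe_le_coe.mpr (hf.1 hxy))
    · intro g hg
      simp only [Finset.mem_filter, Finset.mem_univ, true_and] at hg ⊢
      constructor
      · intro x y hxy
        exact Subtype.mk_le_mk.mpr (Subtype.coe_le_coe.mpr (hg hxy))
      · have := (Finset.mem_Icc.mp (g (Fin.last t)).2).2
        omega
    · intro f hf; funext r; exact Subtype.ext rfl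
    · intro g hg; funext r; exact Subtype.ext rfl
    · intro f hf; rfl

lemma conv_left (β : ℂ) (b t : ℕ) :
    S β 0 b t = ∑ j ∈ Finset.range (t + 1), β⁻¹ ^ j * S β 1 b (t - j) := by
  induction t with
  | zero => simp [S_zero]
  | succ t ih =>
    calc S β 0 b (t + 1)
        = (β + ((0 : ℕ) : ℂ))⁻¹ * S β 0 b t + S β 1 b (t + 1) :=
          S_left β 0 b t (Nat.zero_le b)
      _ = β⁻¹ * ∑ j ∈ Finset.range (t + 1), β⁻¹ ^ j * S β 1 b (t - j) + S β 1 b (t + 1) := by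
          rw [ih]; norm_num
      _ = (∑ j ∈ Finset.range (t + 1), β⁻¹ ^ (j + 1) * S β 1 b (t - j)) + S β 1 b (t + 1) := by
          rw [Finset.mul_sum]; congr 1
          exact Finset.sum_congr rfl fun j _ => by ring
      _ = ∑ j ∈ Finset.range (t + 1 + 1), β⁻¹ ^ j * S β 1 b (t + 1 - j) := by
          rw [Finset.sum_range_succ' _ (t + 1)]
          simp only [Nat.add_sub_add_right, pow_zero, one_mul, Nat.sub_zero]

lemma conv_right (β : ℂ) (a c t : ℕ) (hac : a ≤ c + 1) :
    S β a (c + 1) t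
      = ∑ j ∈ Finset.range (t + 1), (β + ((c + 1 : ℕ) : ℂ))⁻¹ ^ j * S β a c (t - j) := by
  induction t with
  | zero => simp [S_zero]
  | succ t ih =>
    calc S β a (c + 1) (t + 1)
        = (β + ((c + 1 : ℕ) : ℂ))⁻¹ * S β a (c + 1) t + S β a c (t + 1) :=
          S_right β a c t hac
      _ = (β + ((c + 1 : ℕ) : ℂ))⁻¹ *
            ∑ j ∈ Finset.range (t + 1), (β + ((c + 1 : ℕ) : ℂ))⁻¹ ^ j * S β a c (t - j)
            + S β a c (t + 1) := by rw [ih]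
      _ = (∑ j ∈ Finset.range (t + 1),
            (β + ((c + 1 : ℕ) : ℂ))⁻¹ ^ (j + 1) * S β a c (t - j)) + S β a c (t + 1) := by
          rw [Finset.mul_sum]; congr 1
          exact Finset.sum_congr rfl fun j _ => by ring
      _ = ∑ j ∈ Finset.range (t + 1 + 1), (β + ((c + 1 : ℕ) : ℂ))⁻¹ ^ j * S β a c (t + 1 - j) := by
          rw [Finset.sum_range_succ' _ (t + 1)]
          simp only [Nat.add_sub_add_right, pow_zero, one_mul, Nat.sub_zero]

lemma sum_triangle (t : ℕ) (g : ℕ → ℕ → ℂ) :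
    ∑ j ∈ Finset.range (t + 1), ∑ v ∈ Finset.range (t - j + 1), g j v
      = ∑ v ∈ Finset.range (t + 1), ∑ j ∈ Finset.range (t - v + 1), g j v := by
  have expand : ∀ (h : ℕ → ℕ → ℂ) (j : ℕ), j ≤ t →
      ∑ v ∈ Finset.range (t - j + 1), h j v
        = ∑ v ∈ Finset.range (t + 1), if j + v ≤ t then h j v else 0 := by
    intro h j hj
    calc ∑ v ∈ Finset.range (t - j + 1), h j v
        = ∑ v ∈ Finset.range (t - j + 1), (if j + v ≤ t then h j v else 0) :=
          Finset.sum_congr rfl fun v hv => by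
            rw [if_pos]; simp only [Finset.mem_range] at hv; omega
      _ = ∑ v ∈ Finset.range (t + 1), (if j + v ≤ t then h j v else 0) := by
          refine Finset.sum_subset (Finset.range_subset_range.mpr (by omega)) ?_
          intro x hx hnx
          simp only [Finset.mem_range] at hx hnx
          rw [if_neg]; omega
  calc ∑ j ∈ Finset.range (t + 1), ∑ v ∈ Finset.range (t - j + 1), g j v
      = ∑ j ∈ Finset.range (t + 1), ∑ v ∈ Finset.range (t + 1),
          (if j + v ≤ t then g j v else 0) :=
        Finset.sum_congr rfl fun j hj => expand g j (by
          simp only [Finset.mem_range] at hj; omega)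
    _ = ∑ v ∈ Finset.range (t + 1), ∑ j ∈ Finset.range (t + 1),
          (if j + v ≤ t then g j v else 0) := Finset.sum_comm
    _ = ∑ v ∈ Finset.range (t + 1), ∑ j ∈ Finset.range (t - v + 1), g j v := by
        refine Finset.sum_congr rfl fun v hv => ?_
        simp only [Finset.mem_range] at hv
        rw [expand (fun v j => g j v) v (by omega)]
        exact Finset.sum_congr rfl fun j _ => by
          congr 1; simp [add_comm]

/-- With f_n = 1/(β+n):
    ∑_{v=0}^t S_1^q(v)(f_0^{t-v+1} - f_{q+1}^{t-v+1})
      = (f_0 - f_{q+1}) S_0^{q+1}(t) = ((q+1)/(β(β+q+1))) S_0^{q+1}(t). -/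
theorem telescoping_identity
    (β : ℂ) (hβ : ∀ k : ℕ, β ≠ -(k : ℂ)) (t q : ℕ) :
    (∑ v ∈ Finset.range (t + 1),
        S β 1 q v * (β⁻¹ ^ (t - v + 1) - (β + ((q + 1 : ℕ) : ℂ))⁻¹ ^ (t - v + 1)))
      = (β⁻¹ - (β + ((q + 1 : ℕ) : ℂ))⁻¹) * S β 0 (q + 1) t ∧
    (∑ v ∈ Finset.range (t + 1),
        S β 1 q v * (β⁻¹ ^ (t - v + 1) - (β + ((q + 1 : ℕ) : ℂ))⁻¹ ^ (t - v + 1)))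
      = (((q : ℂ) + 1) / (β * (β + ((q : ℂ) + 1)))) * S β 0 (q + 1) t := by

  classical
  have hgeom : ∀ m : ℕ,
      (β⁻¹ - (β + ((q + 1 : ℕ) : ℂ))⁻¹) *
        ∑ j ∈ Finset.range (m + 1), β⁻¹ ^ j * (β + ((q + 1 : ℕ) : ℂ))⁻¹ ^ (m - j)
      = β⁻¹ ^ (m + 1) - (β + ((q + 1 : ℕ) : ℂ))⁻¹ ^ (m + 1) := by
    intro m
    have h := (Commute.all (β⁻¹) ((β + ((q + 1 : ℕ) : ℂ))⁻¹)).mul_geom_sum₂ (m + 1)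
    simpa using h
  have key : S β 0 (q + 1) t
      = ∑ v ∈ Finset.range (t + 1), S β 1 q v *
          ∑ j ∈ Finset.range (t - v + 1),
            β⁻¹ ^ j * (β + ((q + 1 : ℕ) : ℂ))⁻¹ ^ (t - v - j) := by
    rw [conv_left]
    have step1 : ∀ j, j ≤ t →
        S β 1 (q + 1) (t - j)
          = ∑ v ∈ Finset.range (t - j + 1),
              (β + ((q + 1 : ℕ) : ℂ))⁻¹ ^ (t - j - v) * S β 1 q v := by
      intro j hj
      rw [conv_right β 1 q (t - j) (by omega)]
      rw [← Finset.sum_range_reflect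
        (fun v => (β + ((q + 1 : ℕ) : ℂ))⁻¹ ^ (t - j - v) * S β 1 q v) (t - j + 1)]
      refine Finset.sum_congr rfl fun i hi => ?_
      simp only [Finset.mem_range] at hi
      have h1 : t - j + 1 - 1 - i = t - j - i := by omega
      rw [h1]
      congr 1
      congr 1
      omega
    calc ∑ j ∈ Finset.range (t + 1), β⁻¹ ^ j * S β 1 (q + 1) (t - j)
        = ∑ j ∈ Finset.range (t + 1), ∑ v ∈ Finset.range (t - j + 1),
            β⁻¹ ^ j * ((β + ((q + 1 : ℕ) : ℂ))⁻¹ ^ (t - j - v) * S β 1 q v) := by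
          refine Finset.sum_congr rfl fun j hj => ?_
          simp only [Finset.mem_range] at hj
          rw [step1 j (by omega), Finset.mul_sum]
      _ = ∑ v ∈ Finset.range (t + 1), ∑ j ∈ Finset.range (t - v + 1),
            β⁻¹ ^ j * ((β + ((q + 1 : ℕ) : ℂ))⁻¹ ^ (t - j - v) * S β 1 q v) :=
          sum_triangle t _
      _ = ∑ v ∈ Finset.range (t + 1), S β 1 q v *
            ∑ j ∈ Finset.range (t - v + 1),
              β⁻¹ ^ j * (β + ((q + 1 : ℕ) : ℂ))⁻¹ ^ (t - v - j) := by
          refine Finset.sum_congr rfl fun v hv => ?_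
          rw [Finset.mul_sum]
          refine Finset.sum_congr rfl fun j hj => ?_
          simp only [Finset.mem_range] at hj hv
          have h2 : t - j - v = t - v - j := by omega
          rw [h2]; ring
  have first : (∑ v ∈ Finset.range (t + 1),
        S β 1 q v * (β⁻¹ ^ (t - v + 1) - (β + ((q + 1 : ℕ) : ℂ))⁻¹ ^ (t - v + 1)))
      = (β⁻¹ - (β + ((q + 1 : ℕ) : ℂ))⁻¹) * S β 0 (q + 1) t := by
    rw [key, Finset.mul_sum]
    refine Finset.sum_congr rfl fun v hv => ?_
    rw [← hgeom (t - v)]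
    ring
  refine ⟨first, ?_⟩
  rw [first]
  congr 1
  have h0 : β ≠ 0 := fun h => hβ 0 (by simpa using h)
  have h1 : β + ((q : ℂ) + 1) ≠ 0 := fun h => hβ (q + 1) (by push_cast; linear_combination h)
  push_cast
  field_simp
  ring

end
end

section
/- For every complex α not in {−1, −2, ...}, integer s ≥ 1, and integer p ≥ 1: ∑_{n=1}^{p} C(p−1, n−1) (−1)^n/(α+n)^s = −((p−1)!/(α+1)_p) · ∑_{1 ≤ i_1 ≤ ... ≤ i_{s−1} ≤ p} ∏_{r=1}^{s−1} 1/(α + i_r), where the empty sum-product (s = 1) is interpreted as 1. -/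
open scoped Classical
open Finset

noncomputable def Pp (α : ℂ) (r : ℕ) : ℂ := ∏ j ∈ Finset.range r, (α + (j + 1))

noncomputable def Lr (α : ℂ) (s q : ℕ) : ℂ :=
  ∑ m ∈ Finset.range (q+1), (Nat.choose q m : ℂ) * (-1)^(m+1) / (α + (m+1))^s

noncomputable def Hm (α : ℂ) (m q : ℕ) : ℂ :=
  ∑ f ∈ Finset.univ.filter (fun f : Fin m → Fin (q+1) => Monotone f),
    ∏ r, (α + (((f r : ℕ) + 1 : ℕ) : ℂ))⁻¹

lemma Pp_succ (α : ℂ) (r : ℕ) : Pp α (r+1) = Pp α r * (α + (r+1)) := by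
  unfold Pp; rw [Finset.prod_range_succ]

lemma Pp_ne_zero (α : ℂ) (hz : ∀ k : ℕ, α + ((k:ℂ)+1) ≠ 0) (r : ℕ) : Pp α r ≠ 0 :=
  Finset.prod_ne_zero_iff.2 fun j _ => hz j

lemma Pp_shift (α : ℂ) (q : ℕ) : Pp α (q+2) = Pp (α+1) (q+1) * (α + 1) := by
  unfold Pp
  rw [Finset.prod_range_succ' (fun j : ℕ => (α + (j+1)))]
  have h1 : ∏ j ∈ Finset.range (q+1), (α + (((j+1:ℕ):ℂ) + 1))
      = ∏ j ∈ Finset.range (q+1), (α + 1 + ((j:ℂ)+1)) := by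
    apply Finset.prod_congr rfl; intro j _; push_cast; ring
  rw [h1]; push_cast; ring

lemma Hm_zero (α : ℂ) (q : ℕ) : Hm α 0 q = 1 := by
  unfold Hm
  have h : Finset.univ.filter (fun f : Fin 0 → Fin (q+1) => Monotone f) = Finset.univ := by
    apply Finset.filter_true_of_mem; intro f _; intro i j _; exact i.elim0
  rw [h]
  simp

lemma shift_hz (α : ℂ) (hz : ∀ k : ℕ, α + ((k:ℂ)+1) ≠ 0) :
    ∀ k : ℕ, (α + 1) + ((k:ℂ)+1) ≠ 0 := by
  intro k
  have := hz (k+1)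
  push_cast at this ⊢
  intro h; apply this; linear_combination h

lemma Lr_one (q : ℕ) : ∀ (α : ℂ), (∀ k : ℕ, α + ((k:ℂ)+1) ≠ 0) →
    Lr α 1 q = -(Nat.factorial q : ℂ) / Pp α (q+1) := by
  induction q with
  | zero =>
    intro α hz
    unfold Lr Pp
    simp
  | succ q ih =>
    intro α hz
    have hz1 := shift_hz α hz
    have e1 : Lr α 1 (q+1) = Lr α 1 q - Lr (α+1) 1 q := by
      unfold Lr
      rw [Finset.sum_range_succ' (fun m => (Nat.choose (q+1) m : ℂ) * (-1)^(m+1) / (α + (m+1))^1) (q+1)]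
      have hsplit : ∀ i ∈ Finset.range (q+1),
          (Nat.choose (q+1) (i+1) : ℂ) * (-1)^(i+1+1) / (α + ((i+1:ℕ)+1))^1
          = (Nat.choose q (i+1) : ℂ) * (-1)^(i+1+1) / (α + ((i+1:ℕ)+1))^1
            + -((Nat.choose q i : ℂ) * (-1)^(i+1) / ((α+1) + ((i:ℕ)+1))^1) := by
        intro i _
        rw [Nat.choose_succ_succ]
        push_cast
        rw [pow_succ]
        ring
      rw [Finset.sum_congr rfl hsplit, Finset.sum_add_distrib]
      have e2 : ∑ i ∈ Finset.range (q+1), (Nat.choose q (i+1) : ℂ) * (-1)^(i+1+1) / (α + ((i+1:ℕ)+1))^1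
          = ∑ m ∈ Finset.range (q+2), (Nat.choose q m : ℂ) * (-1)^(m+1) / (α + (m+1))^1
            - (Nat.choose q 0 : ℂ) * (-1)^(0+1) / (α + ((0:ℕ)+1))^1 := by
        rw [Finset.sum_range_succ' (fun m => (Nat.choose q m : ℂ) * (-1)^(m+1) / (α + (m+1))^1) (q+1)]
        push_cast
        ring
      rw [e2, Finset.sum_range_succ]
      simp [Nat.choose_succ_self]
      ring
    rw [e1, ih α hz, ih (α+1) hz1]
    have hP := Pp_ne_zero α hz (q+1)
    have h1 : α + 1 ≠ 0 := by have := hz 0; push_cast at this; simpa using this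
    have ha : α + ((q:ℂ)+1+1) ≠ 0 := by have := hz (q+1); push_cast at this; simpa using this
    have hsh := Pp_shift α q
    have hsu := Pp_succ α (q+1)
    push_cast at hsh hsu
    have hQ : Pp (α+1) (q+1) = Pp α (q+1) * (α + ((q:ℂ)+1+1)) / (α+1) := by
      rw [eq_div_iff h1]
      linear_combination hsu - hsh
    rw [hQ, hsu]
    field_simp
    push_cast [Nat.factorial_succ]
    ring

noncomputable def W (α : ℂ) (q b : ℕ) : ℂ :=
  (Nat.factorial q : ℂ) * Pp α (b+1) /
    ((Nat.factorial b : ℂ) * Pp α (q+1) * (α + ((b:ℂ)+1)))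

lemma W_self (α : ℂ) (hz : ∀ k : ℕ, α + ((k:ℂ)+1) ≠ 0) (q : ℕ) :
    W α q q = (α + ((q:ℂ)+1))⁻¹ := by
  unfold W
  have hf : (Nat.factorial q : ℂ) ≠ 0 := Nat.cast_ne_zero.2 (Nat.factorial_ne_zero q)
  field_simp [Pp_ne_zero α hz (q+1), hz q]

lemma W_succ (α : ℂ) (hz : ∀ k : ℕ, α + ((k:ℂ)+1) ≠ 0) (q b : ℕ) :
    W α (q+1) b = (((q:ℂ)+1)/(α + ((q:ℂ)+1+1))) * W α q b := by
  unfold W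
  have hsu := Pp_succ α (q+1)
  push_cast at hsu
  rw [hsu, Nat.factorial_succ]
  have hf : (Nat.factorial b : ℂ) ≠ 0 := Nat.cast_ne_zero.2 (Nat.factorial_ne_zero b)
  have hb : α + ((b:ℂ)+1) ≠ 0 := by have := hz b; push_cast at this; simpa using this
  have hq2 : α + ((q:ℂ)+1+1) ≠ 0 := by have := hz (q+1); push_cast at this; simpa using this
  field_simp [Pp_ne_zero α hz (q+1)]
  push_cast
  ring

lemma innerW_sum (α : ℂ) (hz : ∀ k : ℕ, α + ((k:ℂ)+1) ≠ 0) (a : ℕ) :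
    ∀ q, a ≤ q → ∑ b ∈ Finset.Icc a q, W α q b * (Nat.choose b a : ℂ)
      = (Nat.choose q a : ℂ) / (α + ((a:ℂ)+1)) := by
  refine Nat.le_induction ?_ ?_
  · rw [Finset.Icc_self, Finset.sum_singleton, W_self α hz a]
    simp [div_eq_mul_inv, mul_comm]
  · intro q hq ih
    rw [Finset.sum_Icc_succ_top (by omega : a ≤ q+1)]
    have e1 : ∑ b ∈ Finset.Icc a q, W α (q+1) b * (Nat.choose b a : ℂ)
        = (((q:ℂ)+1)/(α + ((q:ℂ)+1+1))) * ∑ b ∈ Finset.Icc a q, W α q b * (Nat.choose b a : ℂ) := by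
      rw [Finset.mul_sum]
      apply Finset.sum_congr rfl
      intro b _
      rw [W_succ α hz q b]
      ring
    rw [e1, ih, W_self α hz (q+1)]
    have ha1 : α + ((a:ℂ)+1) ≠ 0 := by have := hz a; push_cast at this; simpa using this
    have hq2 : α + ((q:ℂ)+1+1) ≠ 0 := by have := hz (q+1); push_cast at this; simpa using this
    have key : (Nat.choose q a : ℂ) * ((q:ℂ)+1) = (Nat.choose (q+1) a : ℂ) * ((q:ℂ)+1-(a:ℂ)) := by
      have h := Nat.choose_mul_succ_eq q a
      have h2 : ((Nat.choose q a * (q+1) : ℕ) : ℂ) = ((Nat.choose (q+1) a * (q+1-a) : ℕ) : ℂ) := by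
        exact_mod_cast congrArg (Nat.cast (R := ℂ)) h
      push_cast [Nat.cast_sub (show a ≤ q+1 by omega)] at h2
      linear_combination h2
    have h3 : ((q:ℂ)+1) * (Nat.choose q a : ℂ)
        = ((α + ((q:ℂ)+1+1)) - (α + ((a:ℂ)+1))) * (Nat.choose (q+1) a : ℂ) := by
      push_cast
      linear_combination key
    push_cast
    rw [div_mul_div_comm, h3]
    field_simp
    ring

lemma swap_sum (α : ℂ) (hz : ∀ k : ℕ, α + ((k:ℂ)+1) ≠ 0) (s q : ℕ) :
    Lr α (s+1) q = ∑ b ∈ Finset.range (q+1), W α q b * Lr α s b := by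
  unfold Lr
  have e1 : ∑ b ∈ Finset.range (q+1), W α q b *
        (∑ m ∈ Finset.range (b+1), (Nat.choose b m : ℂ) * (-1)^(m+1) / (α + (m+1))^s)
      = ∑ b ∈ Finset.range (q+1), ∑ m ∈ Finset.range (b+1),
          W α q b * ((Nat.choose b m : ℂ) * (-1)^(m+1) / (α + (m+1))^s) := by
    apply Finset.sum_congr rfl; intro b _; rw [Finset.mul_sum]
  rw [e1, Finset.sum_comm' (s' := fun m => Finset.Icc m q) (t' := Finset.range (q+1))
    (by intro b m; simp [Finset.mem_Icc]; omega)]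
  apply Finset.sum_congr rfl
  intro m hm
  have hmq : m ≤ q := by simpa using Nat.lt_succ_iff.1 (Finset.mem_range.1 hm)
  have e2 : ∑ b ∈ Finset.Icc m q, W α q b * ((Nat.choose b m : ℂ) * (-1)^(m+1) / (α + (m+1))^s)
      = ((-1:ℂ)^(m+1) / (α + (m+1))^s) * ∑ b ∈ Finset.Icc m q, W α q b * (Nat.choose b m : ℂ) := by
    rw [Finset.mul_sum]; apply Finset.sum_congr rfl; intro b _; ring
  rw [e2, innerW_sum α hz m q hmq, pow_succ, div_mul_div_comm]
  ring

lemma monotone_snoc {m k : ℕ} (g : Fin m → Fin (k+1)) (hg : Monotone g) (top : Fin (k+1))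
    (h : ∀ r, g r ≤ top) : Monotone (Fin.snoc g top : Fin (m+1) → Fin (k+1)) := by
  intro i j hij
  rcases Fin.eq_castSucc_or_eq_last j with ⟨j', rfl⟩ | rfl
  · rcases Fin.eq_castSucc_or_eq_last i with ⟨i', rfl⟩ | rfl
    · rw [Fin.snoc_castSucc, Fin.snoc_castSucc]
      exact hg (Fin.castSucc_le_castSucc_iff.1 hij)
    · exact absurd hij (Fin.castSucc_lt_last j').not_ge
  · rw [Fin.snoc_last]
    rcases Fin.eq_castSucc_or_eq_last i with ⟨i', rfl⟩ | rfl
    · rw [Fin.snoc_castSucc]; exact h i'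
    · rw [Fin.snoc_last]

lemma fiber_sum (α : ℂ) (m q b : ℕ) (hb : b < q + 1) :
    ∑ f ∈ (Finset.univ.filter (fun f : Fin (m+1) → Fin (q+1) => Monotone f)).filter
        (fun f => (f (Fin.last m) : ℕ) = b),
      ∏ r, (α + (((f r : ℕ) + 1 : ℕ) : ℂ))⁻¹
    = (α + ((b + 1 : ℕ) : ℂ))⁻¹ * Hm α m b := by
  unfold Hm
  rw [Finset.mul_sum]
  refine Finset.sum_bij' (i := fun f hf => fun r : Fin m => (⟨(f r.castSucc : ℕ), ?_⟩ : Fin (b+1)))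
    (j := fun g hg => Fin.snoc (fun r => (g r).castLE (by omega)) (⟨b, hb⟩ : Fin (q+1)))
    ?_ ?_ ?_ ?_ ?_
  · -- bound : (f r.castSucc : ℕ) < b + 1
    simp only [Finset.mem_filter, Finset.mem_univ, true_and] at hf
    have h1 : f r.castSucc ≤ f (Fin.last m) := hf.1 (Fin.le_last _)
    have h2 : (f r.castSucc : ℕ) ≤ (f (Fin.last m) : ℕ) := h1
    omega
  · -- i maps into target
    intro f hf
    simp only [Finset.mem_filter, Finset.mem_univ, true_and] at hf ⊢
    intro r1 r2 hr
    have := hf.1 (Fin.castSucc_le_castSucc_iff.2 hr)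
    exact this
  · -- j maps into source
    intro g hg
    simp only [Finset.mem_filter, Finset.mem_univ, true_and] at hg ⊢
    constructor
    · refine monotone_snoc _ (fun r1 r2 hr => ?_) _ (fun r => ?_)
      · exact hg hr
      · show ((g r).castLE _ : ℕ) ≤ b
        have := (g r).is_lt
        simpa using by omega
    · simp [Fin.snoc_last]
  · -- left inverse
    intro f hf
    beta_reduce
    funext k
    rcases Fin.eq_castSucc_or_eq_last k with ⟨k', rfl⟩ | rfl
    · rw [Fin.snoc_castSucc]
      apply Fin.ext
      rfl
    · rw [Fin.snoc_last]
      apply Fin.ext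
      simp only [Finset.mem_filter, Finset.mem_univ, true_and] at hf
      exact hf.2.symm
  · -- right inverse
    intro g hg
    funext r
    apply Fin.ext
    show ((Fin.snoc (fun r => (g r).castLE _) _ : Fin (m+1) → Fin (q+1)) r.castSucc : ℕ) = (g r : ℕ)
    rw [Fin.snoc_castSucc]
    rfl
  · -- values
    intro f hf
    simp only [Finset.mem_filter, Finset.mem_univ, true_and] at hf
    rw [Fin.prod_univ_castSucc]
    simp only [hf.2]
    ring

lemma Hm_rec (α : ℂ) (m q : ℕ) :
    Hm α (m+1) q = ∑ b ∈ Finset.range (q+1), (α + ((b+1:ℕ):ℂ))⁻¹ * Hm α m b := by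
  rw [show ∑ b ∈ Finset.range (q+1), (α + ((b+1:ℕ):ℂ))⁻¹ * Hm α m b
      = ∑ b ∈ Finset.range (q+1),
          ∑ f ∈ (Finset.univ.filter (fun f : Fin (m+1) → Fin (q+1) => Monotone f)).filter
            (fun f => (f (Fin.last m) : ℕ) = b),
            ∏ r, (α + (((f r : ℕ)+1:ℕ):ℂ))⁻¹
     from Finset.sum_congr rfl fun b hb => (fiber_sum α m q b (Finset.mem_range.1 hb)).symm]
  rw [Finset.sum_fiberwise_of_maps_to (fun f _ => Finset.mem_range.2 (f (Fin.last m)).is_lt)]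
  rfl

lemma main_lemma (t : ℕ) : ∀ (q : ℕ) (α : ℂ), (∀ k : ℕ, α + ((k:ℂ)+1) ≠ 0) →
    Lr α (t+1) q = -((Nat.factorial q : ℂ) / Pp α (q+1)) * Hm α t q := by
  induction t with
  | zero =>
    intro q α hz
    rw [Hm_zero, mul_one, Lr_one q α hz, neg_div]
  | succ t ih =>
    intro q α hz
    rw [swap_sum α hz (t+1) q]
    have e : ∀ b ∈ Finset.range (q+1), W α q b * Lr α (t+1) b
        = -((Nat.factorial q : ℂ)/Pp α (q+1)) * ((α + ((b+1:ℕ):ℂ))⁻¹ * Hm α t b) := by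
      intro b hb
      rw [ih b α hz]
      unfold W
      have hfb : (Nat.factorial b : ℂ) ≠ 0 := Nat.cast_ne_zero.2 (Nat.factorial_ne_zero b)
      have hPb : Pp α (b+1) ≠ 0 := Pp_ne_zero α hz (b+1)
      have hPq : Pp α (q+1) ≠ 0 := Pp_ne_zero α hz (q+1)
      have hzb : α + ((b:ℂ)+1) ≠ 0 := by have := hz b; push_cast at this; simpa using this
      push_cast
      field_simp
    rw [Finset.sum_congr rfl e, ← Finset.mul_sum, ← Hm_rec]


/-- For α ∉ {-1,-2,...}, s ≥ 1 and p ≥ 1: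
    ∑_{n=1}^p C(p-1,n-1)(-1)^n/(α+n)^s
      = -((p-1)!/(α+1)_p) ∑_{1≤i₁≤...≤i_{s-1}≤p} ∏_r 1/(α+i_r). -/
theorem binomial_sum_eq_multiple_harmonic
    (α : ℂ) (hα : ∀ k : ℕ, α ≠ -(k + 1 : ℂ)) (s : ℕ) (hs : 1 ≤ s) (p : ℕ) (hp : 1 ≤ p) :
    ∑ n ∈ Finset.Icc 1 p, (Nat.choose (p - 1) (n - 1) : ℂ) * (-1) ^ n / (α + n) ^ s
      = -((Nat.factorial (p - 1) : ℂ) / (∏ j ∈ Finset.range p, (α + (j + 1)))) *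
          ∑ f ∈ Finset.univ.filter (fun f : Fin (s - 1) → Fin p => Monotone f),
            ∏ r, (α + (((f r : ℕ) + 1 : ℕ) : ℂ))⁻¹ := by
  obtain ⟨t, rfl⟩ : ∃ t, s = t + 1 := ⟨s - 1, by omega⟩
  obtain ⟨q, rfl⟩ : ∃ q, p = q + 1 := ⟨p - 1, by omega⟩
  have hz : ∀ k : ℕ, α + ((k:ℂ)+1) ≠ 0 := by
    intro k h
    exact hα k (by linear_combination h)
  simp only [Nat.add_sub_cancel]
  have hL : ∑ n ∈ Finset.Icc 1 (q+1), (Nat.choose q (n-1) : ℂ) * (-1)^n / (α + n)^(t+1)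
      = Lr α (t+1) q := by
    unfold Lr
    refine Finset.sum_bij' (i := fun n _ => n - 1) (j := fun m _ => m + 1) ?_ ?_ ?_ ?_ ?_
    · intro n hn
      simp only [Finset.mem_Icc] at hn
      simp only [Finset.mem_range]
      omega
    · intro m hm
      simp only [Finset.mem_range] at hm
      simp only [Finset.mem_Icc]
      omega
    · intro n hn
      simp only [Finset.mem_Icc] at hn
      show n - 1 + 1 = n
      omega
    · intro m _
      show m + 1 - 1 = m
      omega
    · intro n hn
      simp only [Finset.mem_Icc] at hn
      obtain ⟨k, rfl⟩ : ∃ k, n = k + 1 := ⟨n - 1, by omega⟩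
      simp only [Nat.add_sub_cancel]
      push_cast
      ring
  rw [hL]
  exact main_lemma t q α hz
end

section
/- Let β be a complex number avoiding nonpositive integers, f_n = 1/(β+n), and for t ≥ 0 let h_t(x_1, ..., x_k) denote the complete homogeneous symmetric polynomial of degree t. Then (f_0 − f_{q+1}) · h_t(f_0, f_1, ..., f_{q+1}) = ∑_{v=0}^{t} h_v(f_1, ..., f_q) · (f_0^{t−v+1} − f_{q+1}^{t−v+1}) for all integers t ≥ 0 and q ≥ 1. -/
open scoped Classical

noncomputable def Stel (t k : ℕ) (y : Fin k → ℂ) : ℂ :=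
  ∑ f ∈ Finset.univ.filter (fun f : Fin t → Fin k => Monotone f), ∏ r, y (f r)

lemma Stel_zero (k : ℕ) (y : Fin k → ℂ) : Stel 0 k y = 1 := by
  unfold Stel
  have hmono : ∀ f : Fin 0 → Fin k, Monotone f := by
    intro f a b _
    exact a.elim0
  rw [Finset.filter_true_of_mem (fun f _ => hmono f)]
  simp

lemma Stel_peelLast (t k : ℕ) (y : Fin (k + 1) → ℂ) :
    Stel (t + 1) (k + 1) y
      = Stel (t + 1) k (fun i => y i.castSucc) + y (Fin.last k) * Stel t (k + 1) y := by
  unfold Stel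
  rw [← Finset.sum_filter_add_sum_filter_not
    (Finset.univ.filter (fun f : Fin (t + 1) → Fin (k + 1) => Monotone f))
    (fun f => f (Fin.last t) = Fin.last k), add_comm]
  congr 1
  · -- f (last t) ≠ last k : values all < k
    rw [Finset.filter_filter]
    refine Finset.sum_bij'
      (i := fun f hf => fun r : Fin (t + 1) =>
        (f r).castLT (by
          simp only [Finset.mem_filter, Finset.mem_univ, true_and] at hf
          have h1 : f r ≤ f (Fin.last t) := hf.1 (Fin.le_last r)
          have h2 : f (Fin.last t) < Fin.last k :=
            lt_of_le_of_ne (Fin.le_last _) hf.2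
          exact lt_of_le_of_lt h1 h2))
      (j := fun g _ => fun r => (g r).castSucc) ?_ ?_ ?_ ?_ ?_
    · intro f hf
      simp only [Finset.mem_filter, Finset.mem_univ, true_and] at hf ⊢
      intro r s hrs
      exact hf.1 hrs
    · intro g hg
      simp only [Finset.mem_filter, Finset.mem_univ, true_and] at hg ⊢
      constructor
      · intro r s hrs
        exact Fin.castSucc_le_castSucc_iff.mpr (hg hrs)
      · exact (Fin.castSucc_lt_last _).ne
    · intro f hf
      funext r
      simp
    · intro g hg
      funext r
      simp
    · intro f hf
      refine Finset.prod_congr rfl fun r _ => ?_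
      congr 1
  · -- f (last t) = last k
    rw [Finset.filter_filter, Finset.mul_sum]
    refine Finset.sum_bij'
      (i := fun f _ => fun r : Fin t => f r.castSucc)
      (j := fun g _ => Fin.snoc g (Fin.last k)) ?_ ?_ ?_ ?_ ?_
    · intro f hf
      simp only [Finset.mem_filter, Finset.mem_univ, true_and] at hf ⊢
      intro r s hrs
      exact hf.1 (Fin.castSucc_le_castSucc_iff.mpr hrs)
    · intro g hg
      simp only [Finset.mem_filter, Finset.mem_univ, true_and] at hg ⊢
      refine ⟨?_, Fin.snoc_last _ _⟩
      intro r s hrs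
      induction s using Fin.lastCases with
      | last => simp only [Fin.snoc_last]; exact Fin.le_last _
      | cast s' =>
        induction r using Fin.lastCases with
        | last => exact absurd hrs (Fin.castSucc_lt_last s').not_ge
        | cast r' =>
          simp only [Fin.snoc_castSucc]
          exact hg (Fin.castSucc_le_castSucc_iff.mp hrs)
    · intro f hf
      simp only [Finset.mem_filter, Finset.mem_univ, true_and] at hf
      funext r
      induction r using Fin.lastCases with
      | last => simp [hf.2]
      | cast r' => simp
    · intro g hg
      funext r
      simp
    · intro f hf
      simp only [Finset.mem_filter, Finset.mem_univ, true_and] at hf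
      rw [Fin.prod_univ_castSucc, hf.2, mul_comm]

lemma Stel_peelFirst (t k : ℕ) (y : Fin (k + 1) → ℂ) :
    Stel (t + 1) (k + 1) y
      = Stel (t + 1) k (fun i => y i.succ) + y 0 * Stel t (k + 1) y := by
  unfold Stel
  rw [← Finset.sum_filter_add_sum_filter_not
    (Finset.univ.filter (fun f : Fin (t + 1) → Fin (k + 1) => Monotone f))
    (fun f => f 0 = 0), add_comm]
  congr 1
  · -- f 0 ≠ 0 : all values nonzero
    rw [Finset.filter_filter]
    refine Finset.sum_bij'
      (i := fun f hf => fun r : Fin (t + 1) =>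
        (f r).pred (by
          simp only [Finset.mem_filter, Finset.mem_univ, true_and] at hf
          have h1 : f 0 ≤ f r := hf.1 (Fin.zero_le r)
          intro h0
          exact hf.2 (le_antisymm (h0 ▸ h1) (Fin.zero_le _))))
      (j := fun g _ => fun r => (g r).succ) ?_ ?_ ?_ ?_ ?_
    · intro f hf
      simp only [Finset.mem_filter, Finset.mem_univ, true_and] at hf ⊢
      intro r s hrs
      exact Fin.pred_le_pred_iff.mpr (hf.1 hrs)
    · intro g hg
      simp only [Finset.mem_filter, Finset.mem_univ, true_and] at hg ⊢
      exact ⟨fun r s hrs => Fin.succ_le_succ_iff.mpr (hg hrs), Fin.succ_ne_zero _⟩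
    · intro f hf
      funext r
      simp
    · intro g hg
      funext r
      simp
    · intro f hf
      refine Finset.prod_congr rfl fun r _ => ?_
      congr 1
      simp
  · -- f 0 = 0
    rw [Finset.filter_filter, Finset.mul_sum]
    refine Finset.sum_bij'
      (i := fun f _ => fun r : Fin t => f r.succ)
      (j := fun g _ => Fin.cons 0 g) ?_ ?_ ?_ ?_ ?_
    · intro f hf
      simp only [Finset.mem_filter, Finset.mem_univ, true_and] at hf ⊢
      intro r s hrs
      exact hf.1 (Fin.succ_le_succ_iff.mpr hrs)
    · intro g hg
      simp only [Finset.mem_filter, Finset.mem_univ, true_and] at hg ⊢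
      refine ⟨?_, Fin.cons_zero _ _⟩
      intro r s hrs
      induction r using Fin.cases with
      | zero => simp only [Fin.cons_zero]; exact Fin.zero_le _
      | succ r' =>
        induction s using Fin.cases with
        | zero => exact absurd hrs (Fin.succ_pos r').not_ge
        | succ s' =>
          simp only [Fin.cons_succ]
          exact hg (Fin.succ_le_succ_iff.mp hrs)
    · intro f hf
      simp only [Finset.mem_filter, Finset.mem_univ, true_and] at hf
      funext r
      induction r using Fin.cases with
      | zero => simp [hf.2]
      | succ r' => simp
    · intro g hg
      funext r
      simp
    · intro f hf
      simp only [Finset.mem_filter, Finset.mem_univ, true_and] at hf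
      rw [Fin.prod_univ_succ, hf.2]

section Seq

variable (x : ℕ → ℂ) (q : ℕ)

noncomputable def Atel (t : ℕ) : ℂ := Stel t (q + 2) (fun i => x (i : ℕ))
noncomputable def Btel (t : ℕ) : ℂ := Stel t (q + 1) (fun i => x ((i : ℕ) + 1))
noncomputable def Ctel (t : ℕ) : ℂ := Stel t q (fun i => x ((i : ℕ) + 1))

lemma Atel_rec (t : ℕ) : Atel x q (t + 1) = Btel x q (t + 1) + x 0 * Atel x q t := by
  unfold Atel Btel
  rw [Stel_peelFirst]
  simp [Fin.val_succ]

lemma Btel_rec (t : ℕ) : Btel x q (t + 1) = Ctel x q (t + 1) + x (q + 1) * Btel x q t := by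
  unfold Btel Ctel
  rw [Stel_peelLast]
  simp [Fin.val_last, Fin.coe_castSucc]

lemma Btel_form (t : ℕ) :
    Btel x q t = ∑ v ∈ Finset.range (t + 1), Ctel x q v * x (q + 1) ^ (t - v) := by
  induction t with
  | zero => simp [Btel, Ctel, Stel_zero]
  | succ t ih =>
    rw [Btel_rec, ih, Finset.mul_sum]
    conv_rhs => rw [Finset.sum_range_succ]
    rw [Nat.sub_self, pow_zero, mul_one, add_comm]
    congr 1
    refine Finset.sum_congr rfl fun v hv => ?_
    rw [Finset.mem_range] at hv
    have h1 : t + 1 - v = (t - v) + 1 := by omega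
    rw [h1, pow_succ]
    ring

noncomputable def gtel (n : ℕ) : ℂ := ∑ i ∈ Finset.range (n + 1), x 0 ^ i * x (q + 1) ^ (n - i)

lemma gtel_zero : gtel x q 0 = 1 := by simp [gtel]

lemma gtel_rec (n : ℕ) : gtel x q (n + 1) = x (q + 1) ^ (n + 1) + x 0 * gtel x q n := by
  unfold gtel
  rw [Finset.sum_range_succ', Finset.mul_sum]
  simp only [pow_zero, one_mul, Nat.sub_zero, pow_succ, Nat.succ_sub_succ]
  rw [add_comm]
  congr 1
  refine Finset.sum_congr rfl fun i _ => ?_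
  ring

lemma Atel_form (t : ℕ) :
    Atel x q t = ∑ v ∈ Finset.range (t + 1), Ctel x q v * gtel x q (t - v) := by
  induction t with
  | zero => simp [Atel, Ctel, Stel_zero, gtel_zero]
  | succ t ih =>
    rw [Atel_rec, Btel_form, ih, Finset.mul_sum]
    conv_rhs => rw [Finset.sum_range_succ]
    conv_lhs => rw [Finset.sum_range_succ]
    simp only [Nat.sub_self, pow_zero, mul_one, gtel_zero]
    rw [add_right_comm]
    congr 1
    rw [← Finset.sum_add_distrib]
    refine Finset.sum_congr rfl fun v hv => ?_
    rw [Finset.mem_range] at hv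
    have h1 : t + 1 - v = (t - v) + 1 := by omega
    rw [h1, gtel_rec]
    ring

lemma gtel_mul (n : ℕ) :
    (x 0 - x (q + 1)) * gtel x q n = x 0 ^ (n + 1) - x (q + 1) ^ (n + 1) := by
  rw [← geom_sum₂_mul (x 0) (x (q + 1)) (n + 1), mul_comm]
  congr 1

lemma main_identity (t : ℕ) :
    (x 0 - x (q + 1)) * Atel x q t
      = ∑ v ∈ Finset.range (t + 1),
          Ctel x q v * (x 0 ^ (t - v + 1) - x (q + 1) ^ (t - v + 1)) := by
  rw [Atel_form, Finset.mul_sum]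
  refine Finset.sum_congr rfl fun v _ => ?_
  rw [show (x 0 - x (q + 1)) * (Ctel x q v * gtel x q (t - v))
      = Ctel x q v * ((x 0 - x (q + 1)) * gtel x q (t - v)) from by ring, gtel_mul]

end Seq

/-- With f_n = 1/(β+n) and h_t the complete homogeneous symmetric sum
    (h_t(x_1,...,x_k) = ∑_{1≤j₁≤...≤j_t≤k} x_{j₁}⋯x_{j_t}, h_0 = 1):
    (f_0 - f_{q+1}) h_t(f_0,...,f_{q+1})
      = ∑_{v=0}^t h_v(f_1,...,f_q)(f_0^{t-v+1} - f_{q+1}^{t-v+1}). -/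
theorem homogeneous_symmetric_telescoping
    (β : ℂ) (hβ : ∀ k : ℕ, β ≠ -(k : ℂ)) (t q : ℕ) (hq : 1 ≤ q) :
    (β⁻¹ - (β + ((q + 1 : ℕ) : ℂ))⁻¹) *
        ∑ f ∈ Finset.univ.filter (fun f : Fin t → Fin (q + 2) => Monotone f),
          ∏ r, (β + ((f r : ℕ) : ℂ))⁻¹
      = ∑ v ∈ Finset.range (t + 1),
          (∑ f ∈ Finset.univ.filter (fun f : Fin v → Fin q => Monotone f),
            ∏ r, (β + (((f r : ℕ) + 1 : ℕ) : ℂ))⁻¹) *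
          (β⁻¹ ^ (t - v + 1) - (β + ((q + 1 : ℕ) : ℂ))⁻¹ ^ (t - v + 1)) := by
  have key := main_identity (fun n : ℕ => (β + (n : ℂ))⁻¹) q t
  simp only [Atel, Btel, Ctel, Stel, Nat.cast_zero, add_zero] at key
  exact key
end
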